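/- arXiv:2601.07993 — 6 statements merged into one kernel-verified Lean document; each statement's English description precedes it below -/
import Mathlib

section
/- Let B be the ordinal sum of copulas B_1,…,B_n with respect to pairwise disjoint open subintervals (a_1,b_1),…,(a_n,b_n) of [0,1]. Then Spearman's rho of B satisfies ρ(B) = 1 − Σ_{k=1}^n (b_k − a_k)³ · (1 − ρ(B_k)). -/
open MeasureTheory Set

/-- A bivariate copula, viewed as a real function of two variables whose defining
properties are required on the unit square. -/
def IsCopula (C : ℝ → ℝ → ℝ) : Prop :=
  (∀ v ∈ Icc (0:ℝ) 1, C 0 v = 0) ∧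
  (∀ u ∈ Icc (0:ℝ) 1, C u 0 = 0) ∧
  (∀ u ∈ Icc (0:ℝ) 1, C u 1 = u) ∧
  (∀ v ∈ Icc (0:ℝ) 1, C 1 v = v) ∧
  (∀ u₁ u₂ v₁ v₂ : ℝ, 0 ≤ u₁ → u₁ ≤ u₂ → u₂ ≤ 1 → 0 ≤ v₁ → v₁ ≤ v₂ → v₂ ≤ 1 →
    0 ≤ C u₂ v₂ - C u₂ v₁ - C u₁ v₂ + C u₁ v₁)

/-- Spearman's rho: ρ(C) = 12·∫₀¹∫₀¹ C(u,v) du dv − 3. -/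
noncomputable def spearmanRho (C : ℝ → ℝ → ℝ) : ℝ :=
  12 * (∫ u in (0:ℝ)..1, ∫ v in (0:ℝ)..1, C u v) - 3

/-- Spearman's footrule: φ(C) = 6·∫₀¹ C(u,u) du − 2. -/
noncomputable def footrule (C : ℝ → ℝ → ℝ) : ℝ :=
  6 * (∫ u in (0:ℝ)..1, C u u) - 2

/-- Gini's gamma: γ(C) = 4·∫₀¹ C(u,u) du + 4·∫₀¹ C(u,1−u) du − 2. -/
noncomputable def giniGamma (C : ℝ → ℝ → ℝ) : ℝ :=
  4 * (∫ u in (0:ℝ)..1, C u u) + 4 * (∫ u in (0:ℝ)..1, C u (1 - u)) - 2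

/-- Blomqvist's beta: β(C) = 4·C(1/2,1/2) − 1. -/
noncomputable def blomqvistBeta (C : ℝ → ℝ → ℝ) : ℝ :=
  4 * C (1/2) (1/2) - 1

/-- A copula measure of a copula `C`: a probability measure on the plane with
μ([0,u]×[0,v]) = C(u,v) for u,v in the unit interval. -/
def IsCopulaMeasure (C : ℝ → ℝ → ℝ) (μ : Measure (ℝ × ℝ)) : Prop :=
  IsProbabilityMeasure μ ∧
  ∀ u ∈ Icc (0:ℝ) 1, ∀ v ∈ Icc (0:ℝ) 1,
    μ (Icc 0 u ×ˢ Icc 0 v) = ENNReal.ofReal (C u v)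

/-- Kendall's tau expressed via a copula measure μ of C:
τ(C) = 4·∫_{[0,1]²} C dμ − 1. -/
noncomputable def kendallTauInt (C : ℝ → ℝ → ℝ) (μ : Measure (ℝ × ℝ)) : ℝ :=
  4 * (∫ p in Icc (0:ℝ) 1 ×ˢ Icc (0:ℝ) 1, C p.1 p.2 ∂μ) - 1

/-- `B` is the ordinal sum of the copulas `Bk k` with respect to the pairwise disjoint
open subintervals `(a k, b k)` of `[0,1]`. -/
def IsOrdinalSum {n : ℕ} (a b : Fin n → ℝ) (Bk : Fin n → ℝ → ℝ → ℝ)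
    (B : ℝ → ℝ → ℝ) : Prop :=
  (∀ k, 0 ≤ a k ∧ a k ≤ b k ∧ b k ≤ 1) ∧
  (Pairwise fun i j => Disjoint (Ioo (a i) (b i)) (Ioo (a j) (b j))) ∧
  (∀ k, ∀ u ∈ Icc (a k) (b k), ∀ v ∈ Icc (a k) (b k),
    B u v = a k + (b k - a k) * Bk k ((u - a k) / (b k - a k)) ((v - a k) / (b k - a k))) ∧
  (∀ u ∈ Icc (0:ℝ) 1, ∀ v ∈ Icc (0:ℝ) 1,
    (∀ k, ¬(u ∈ Icc (a k) (b k) ∧ v ∈ Icc (a k) (b k))) → B u v = min u v)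

lemma cop_mono_right {C : ℝ → ℝ → ℝ} (hC : IsCopula C) {u : ℝ} (hu : u ∈ Icc (0:ℝ) 1) :
    MonotoneOn (fun v => C u v) (Icc (0:ℝ) 1) := by
  intro v₁ h1 v₂ h2 h12
  have h := hC.2.2.2.2 0 u v₁ v₂ le_rfl hu.1 hu.2 h1.1 h12 h2.2
  have e1 := hC.1 v₁ h1
  have e2 := hC.1 v₂ h2
  simp only []
  linarith

lemma cop_mono_left {C : ℝ → ℝ → ℝ} (hC : IsCopula C) {v : ℝ} (hv : v ∈ Icc (0:ℝ) 1) :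
    MonotoneOn (fun u => C u v) (Icc (0:ℝ) 1) := by
  intro u₁ h1 u₂ h2 h12
  have h := hC.2.2.2.2 u₁ u₂ 0 v h1.1 h12 h2.2 le_rfl hv.1 hv.2
  have e1 := hC.2.1 u₁ h1
  have e2 := hC.2.1 u₂ h2
  simp only []
  linarith

lemma cop_intInt_right {C : ℝ → ℝ → ℝ} (hC : IsCopula C) {u : ℝ} (hu : u ∈ Icc (0:ℝ) 1) :
    IntervalIntegrable (fun v => C u v) volume 0 1 := by
  apply MonotoneOn.intervalIntegrable
  rw [uIcc_of_le (by norm_num : (0:ℝ) ≤ 1)]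
  exact cop_mono_right hC hu

lemma cop_I_mono {C : ℝ → ℝ → ℝ} (hC : IsCopula C) :
    MonotoneOn (fun u => ∫ v in (0:ℝ)..1, C u v) (Icc (0:ℝ) 1) := by
  intro u₁ h1 u₂ h2 h12
  apply intervalIntegral.integral_mono_on (by norm_num)
    (cop_intInt_right hC h1) (cop_intInt_right hC h2)
  intro v hv
  exact cop_mono_left hC hv h1 h2 h12

lemma min_intInt (u : ℝ) (c d : ℝ) : IntervalIntegrable (fun v => min u v) volume c d :=
  (continuous_const.min continuous_id).intervalIntegrable c d

lemma min_integral {u : ℝ} (hu : u ∈ Icc (0:ℝ) 1) :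
    ∫ v in (0:ℝ)..1, min u v = u - u^2/2 := by
  rw [← intervalIntegral.integral_add_adjacent_intervals (min_intInt u 0 u) (min_intInt u u 1)]
  have h1 : ∫ v in (0:ℝ)..u, min u v = ∫ v in (0:ℝ)..u, v := by
    apply intervalIntegral.integral_congr
    intro v hv
    rw [uIcc_of_le hu.1] at hv
    exact min_eq_right hv.2
  have h2 : ∫ v in u..(1:ℝ), min u v = ∫ v in u..(1:ℝ), u := by
    apply intervalIntegral.integral_congr
    intro v hv
    rw [uIcc_of_le hu.2] at hv
    exact min_eq_left hv.1
  rw [h1, h2]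
  simp
  ring

lemma min_double_integral : ∫ u in (0:ℝ)..1, (u - u^2/2) = 1/3 := by
  have : ∫ u in (0:ℝ)..1, (u - u^2/2)
      = (∫ u in (0:ℝ)..1, u) - (∫ u in (0:ℝ)..1, u^2/2) := by
    apply intervalIntegral.integral_sub
    · exact (continuous_id).intervalIntegrable 0 1
    · exact (by continuity : Continuous fun u:ℝ => u^2/2).intervalIntegrable 0 1
  rw [this]
  norm_num [intervalIntegral.integral_div]

noncomputable def Dterm (a b : ℝ) (Ck : ℝ → ℝ → ℝ) (u v : ℝ) : ℝ :=
  if u ∈ Ioo a b ∧ v ∈ Ioo a b then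
    (b - a) * (Ck ((u-a)/(b-a)) ((v-a)/(b-a)) - min ((u-a)/(b-a)) ((v-a)/(b-a)))
  else 0

section
variable {a b : ℝ} {Ck : ℝ → ℝ → ℝ}

lemma scale_mem {a b u : ℝ} (hab : a ≤ b) (hu : u ∈ Icc a b) :
    (u - a)/(b - a) ∈ Icc (0:ℝ) 1 := by
  rcases eq_or_lt_of_le hab with h | h
  · subst h; simp
  · constructor
    · exact div_nonneg (by linarith [hu.1]) (by linarith)
    · rw [div_le_one (by linarith)]; linarith [hu.2]

lemma Dterm_eq_indicator {u : ℝ} (hu : u ∈ Ioo a b) :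
    (fun v => Dterm a b Ck u v) = Set.indicator (Ioo a b)
      (fun v => (b - a) * (Ck ((u-a)/(b-a)) ((v-a)/(b-a)) - min ((u-a)/(b-a)) ((v-a)/(b-a)))) := by
  funext v
  rw [Set.indicator_apply, Dterm]
  by_cases hv : v ∈ Ioo a b
  · rw [if_pos ⟨hu, hv⟩, if_pos hv]
  · rw [if_neg (fun h => hv h.2), if_neg hv]

lemma Dterm_zero {u v : ℝ} (hu : u ∉ Ioo a b) : Dterm a b Ck u v = 0 := by
  rw [Dterm, if_neg (fun h => hu h.1)]
end

section
variable {a b : ℝ} {Ck : ℝ → ℝ → ℝ}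

lemma g_intInt (hCk : IsCopula Ck) (hab : a < b) {w : ℝ} (hw : w ∈ Icc (0:ℝ) 1) :
    IntervalIntegrable
      (fun v => (b - a) * (Ck w ((v-a)/(b-a)) - min w ((v-a)/(b-a)))) volume a b := by
  apply IntervalIntegrable.const_mul
  apply IntervalIntegrable.sub
  · apply MonotoneOn.intervalIntegrable
    rw [uIcc_of_le hab.le]
    intro v₁ h1 v₂ h2 h12
    exact cop_mono_right hCk hw (scale_mem hab.le h1) (scale_mem hab.le h2)
      (by apply div_le_div_of_nonneg_right (by linarith) (by linarith))
  · exact ((continuous_const.min ((continuous_id.sub continuous_const).div_const _)).intervalIntegrable a b)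

end

section
variable {a b : ℝ} {Ck : ℝ → ℝ → ℝ}

lemma indicator_Ioo_intInt {g : ℝ → ℝ} (hg : IntervalIntegrable g volume a b) (hab : a ≤ b) :
    IntervalIntegrable (Set.indicator (Ioo a b) g) volume 0 1 := by
  have h1 : IntegrableOn g (Ioo a b) volume := by
    have := (intervalIntegrable_iff_integrableOn_Ioo_of_le hab).mp hg
    exact this
  have h2 : Integrable (Set.indicator (Ioo a b) g) volume :=
    (integrable_indicator_iff measurableSet_Ioo).mpr h1
  rw [intervalIntegrable_iff]
  exact h2.integrableOn

lemma indicator_Ioo_integral {g : ℝ → ℝ} (hg : IntervalIntegrable g volume a b)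
    (ha : 0 ≤ a) (hab : a ≤ b) (hb : b ≤ 1) :
    ∫ v in (0:ℝ)..1, Set.indicator (Ioo a b) g v = ∫ v in a..b, g v := by
  rw [intervalIntegral.integral_of_le (by norm_num : (0:ℝ) ≤ 1)]
  rw [integral_indicator measurableSet_Ioo, Measure.restrict_restrict measurableSet_Ioo]
  have hsub : Ioo a b ∩ Ioc 0 1 = Ioo a b := by
    apply inter_eq_left.mpr
    intro x hx
    exact ⟨lt_of_le_of_lt ha hx.1, le_trans hx.2.le hb⟩
  rw [hsub, ← integral_Ioc_eq_integral_Ioo, ← intervalIntegral.integral_of_le hab]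

end

noncomputable def Eterm (a b : ℝ) (Ck : ℝ → ℝ → ℝ) (u : ℝ) : ℝ :=
  if u ∈ Ioo a b then
    (b - a)^2 * ((∫ t in (0:ℝ)..1, Ck ((u-a)/(b-a)) t)
      - (((u-a)/(b-a)) - ((u-a)/(b-a))^2/2))
  else 0

section
variable {a b : ℝ} {Ck : ℝ → ℝ → ℝ}

lemma Dterm_intInt (hCk : IsCopula Ck) (ha : 0 ≤ a) (hab : a ≤ b) (hb : b ≤ 1) (u : ℝ) :
    IntervalIntegrable (fun v => Dterm a b Ck u v) volume 0 1 := by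
  by_cases hu : u ∈ Ioo a b
  · rw [Dterm_eq_indicator hu]
    exact indicator_Ioo_intInt (g_intInt hCk (hu.1.trans hu.2) (scale_mem hab ⟨hu.1.le, hu.2.le⟩)) hab
  · have : (fun v => Dterm a b Ck u v) = fun _ => (0:ℝ) := funext fun v => Dterm_zero hu
    rw [this]
    exact intervalIntegrable_const

lemma Dterm_integral_eq_Eterm (hCk : IsCopula Ck) (ha : 0 ≤ a) (hab : a ≤ b) (hb : b ≤ 1)
    (u : ℝ) : ∫ v in (0:ℝ)..1, Dterm a b Ck u v = Eterm a b Ck u := by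
  by_cases hu : u ∈ Ioo a b
  · have hlt : a < b := hu.1.trans hu.2
    have hne : b - a ≠ 0 := by linarith
    have hwmem : (u-a)/(b-a) ∈ Icc (0:ℝ) 1 := scale_mem hab ⟨hu.1.le, hu.2.le⟩
    set w := (u-a)/(b-a) with hw
    rw [Dterm_eq_indicator hu, Eterm, if_pos hu,
      indicator_Ioo_integral (g_intInt hCk hlt hwmem) ha hab hb]
    have comp : ∫ v in a..b, (b - a) * (Ck w ((v-a)/(b-a)) - min w ((v-a)/(b-a)))
        = (b-a) * ∫ v in a..b, (fun x => Ck w (x/(b-a)) - min w (x/(b-a))) (v - a) := by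
      rw [intervalIntegral.integral_const_mul]
    rw [comp, intervalIntegral.integral_comp_sub_right
      (fun x => Ck w (x/(b-a)) - min w (x/(b-a))) a]
    have : a - a = 0 := by ring
    rw [this, intervalIntegral.integral_comp_div (f := fun t => Ck w t - min w t) hne]
    have h0 : (0:ℝ)/(b-a) = 0 := by simp
    have h1 : (b-a)/(b-a) = 1 := div_self hne
    rw [h0, h1, smul_eq_mul]
    rw [intervalIntegral.integral_sub (cop_intInt_right hCk hwmem) (min_intInt w 0 1),
      min_integral hwmem]
    ring
  · have : (fun v => Dterm a b Ck u v) = fun _ => (0:ℝ) := funext fun v => Dterm_zero hu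
    rw [this, Eterm, if_neg hu]
    simp

end

section
variable {a b : ℝ} {Ck : ℝ → ℝ → ℝ}

lemma Eterm_eq_indicator :
    (fun u => Eterm a b Ck u) = Set.indicator (Ioo a b)
      (fun u => (b - a)^2 * ((∫ t in (0:ℝ)..1, Ck ((u-a)/(b-a)) t)
        - (((u-a)/(b-a)) - ((u-a)/(b-a))^2/2))) := by
  funext u
  rw [Set.indicator_apply, Eterm]

lemma G_intInt (hCk : IsCopula Ck) (hab : a < b) :
    IntervalIntegrable (fun u => (b - a)^2 * ((∫ t in (0:ℝ)..1, Ck ((u-a)/(b-a)) t)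
      - (((u-a)/(b-a)) - ((u-a)/(b-a))^2/2))) volume a b := by
  apply IntervalIntegrable.const_mul
  apply IntervalIntegrable.sub
  · apply MonotoneOn.intervalIntegrable
    rw [uIcc_of_le hab.le]
    intro u₁ h1 u₂ h2 h12
    exact cop_I_mono hCk (scale_mem hab.le h1) (scale_mem hab.le h2)
      (div_le_div_of_nonneg_right (by linarith) (by linarith))
  · apply Continuous.intervalIntegrable
    have hc : Continuous (fun u : ℝ => (u-a)/(b-a)) :=
      (continuous_id.sub continuous_const).div_const _
    exact (hc.sub ((hc.pow 2).div_const 2))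

lemma Eterm_intInt (hCk : IsCopula Ck) (ha : 0 ≤ a) (hab : a ≤ b) (hb : b ≤ 1) :
    IntervalIntegrable (fun u => Eterm a b Ck u) volume 0 1 := by
  rcases eq_or_lt_of_le hab with h | h
  · have : (fun u => Eterm a b Ck u) = fun _ => (0:ℝ) := by
      funext u; rw [Eterm, if_neg]; subst h; simp
    rw [this]; exact intervalIntegrable_const
  · rw [Eterm_eq_indicator]
    exact indicator_Ioo_intInt (G_intInt hCk h) hab

lemma Eterm_integral (hCk : IsCopula Ck) (ha : 0 ≤ a) (hab : a ≤ b) (hb : b ≤ 1) :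
    ∫ u in (0:ℝ)..1, Eterm a b Ck u
      = (b - a)^3 * ((∫ u in (0:ℝ)..1, ∫ t in (0:ℝ)..1, Ck u t) - 1/3) := by
  rcases eq_or_lt_of_le hab with h | h
  · have : (fun u => Eterm a b Ck u) = fun _ => (0:ℝ) := by
      funext u; rw [Eterm, if_neg]; subst h; simp
    rw [this]; subst h; simp
  · have hne : b - a ≠ 0 := by linarith
    rw [Eterm_eq_indicator, indicator_Ioo_integral (G_intInt hCk h) ha hab hb,
      intervalIntegral.integral_const_mul]
    have comp : ∫ u in a..b, ((∫ t in (0:ℝ)..1, Ck ((u-a)/(b-a)) t)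
        - (((u-a)/(b-a)) - ((u-a)/(b-a))^2/2))
        = ∫ u in a..b, (fun x => (∫ t in (0:ℝ)..1, Ck (x/(b-a)) t)
          - ((x/(b-a)) - (x/(b-a))^2/2)) (u - a) := rfl
    rw [comp, intervalIntegral.integral_comp_sub_right (fun x => (∫ t in (0:ℝ)..1, Ck (x/(b-a)) t)
          - ((x/(b-a)) - (x/(b-a))^2/2)) a, sub_self,
      intervalIntegral.integral_comp_div
        (f := fun w => (∫ t in (0:ℝ)..1, Ck w t) - (w - w^2/2)) hne,
      zero_div, div_self hne, smul_eq_mul]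
    have hsplit : ∫ w in (0:ℝ)..1, ((∫ t in (0:ℝ)..1, Ck w t) - (w - w^2/2))
        = (∫ w in (0:ℝ)..1, ∫ t in (0:ℝ)..1, Ck w t) - ∫ w in (0:ℝ)..1, (w - w^2/2) := by
      apply intervalIntegral.integral_sub
      · apply MonotoneOn.intervalIntegrable
        rw [uIcc_of_le (by norm_num : (0:ℝ) ≤ 1)]
        exact cop_I_mono hCk
      · exact (by fun_prop : Continuous fun w : ℝ => w - w^2/2).intervalIntegrable 0 1
    rw [hsplit, min_double_integral]
    ring

end

lemma B_decomp {n : ℕ} {a b : Fin n → ℝ} {Bk : Fin n → ℝ → ℝ → ℝ} {B : ℝ → ℝ → ℝ}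
    (hBk : ∀ k, IsCopula (Bk k)) (hB : IsOrdinalSum a b Bk B)
    {u v : ℝ} (hu : u ∈ Icc (0:ℝ) 1) (hv : v ∈ Icc (0:ℝ) 1) :
    B u v = min u v + ∑ k, Dterm (a k) (b k) (Bk k) u v := by
  by_cases hA : ∃ j, u ∈ Ioo (a j) (b j) ∧ v ∈ Ioo (a j) (b j)
  · obtain ⟨j, huj, hvj⟩ := hA
    have hlt : a j < b j := huj.1.trans huj.2
    have hne : b j - a j ≠ 0 := by linarith
    have hsum : ∑ k, Dterm (a k) (b k) (Bk k) u v = Dterm (a j) (b j) (Bk j) u v := by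
      apply Finset.sum_eq_single_of_mem j (Finset.mem_univ j)
      intro i _ hij
      rw [Dterm, if_neg]
      rintro ⟨hui, hvi⟩
      exact (Set.disjoint_left.mp (hB.2.1 hij) hui) huj
    rw [hsum, Dterm, if_pos ⟨huj, hvj⟩]
    rw [hB.2.2.1 j u ⟨huj.1.le, huj.2.le⟩ v ⟨hvj.1.le, hvj.2.le⟩]
    have hmin : min ((u - a j)/(b j - a j)) ((v - a j)/(b j - a j))
        = (min u v - a j)/(b j - a j) := by
      rcases le_total u v with h | h
      · rw [min_eq_left h, min_eq_left (by apply div_le_div_of_nonneg_right (by linarith) (by linarith))]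
      · rw [min_eq_right h, min_eq_right (by apply div_le_div_of_nonneg_right (by linarith) (by linarith))]
    rw [hmin]
    field_simp
    ring
  · push_neg at hA
    have hsum : ∑ k, Dterm (a k) (b k) (Bk k) u v = 0 := by
      apply Finset.sum_eq_zero
      intro i _
      rw [Dterm, if_neg]
      rintro ⟨hui, hvi⟩
      exact (hA i hui) hvi
    rw [hsum, add_zero]
    by_cases hK : ∃ k, u ∈ Icc (a k) (b k) ∧ v ∈ Icc (a k) (b k)
    · obtain ⟨k, huk, hvk⟩ := hK
      have heq := hB.2.2.1 k u huk v hvk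
      rcases eq_or_lt_of_le (hB.1 k).2.1 with hd | hd
      · -- degenerate: a k = b k, u = v = a k
        have hu' : u = a k := le_antisymm (hd ▸ huk.2) huk.1
        have hv' : v = a k := le_antisymm (hd ▸ hvk.2) hvk.1
        rw [heq, ← hd, hu', hv']
        simp
      · have hne : b k - a k ≠ 0 := by linarith
        have hcase : u ∉ Ioo (a k) (b k) ∨ v ∉ Ioo (a k) (b k) := by
          by_contra hcon
          push_neg at hcon
          exact (hA k hcon.1) hcon.2
        have hvm : (v - a k)/(b k - a k) ∈ Icc (0:ℝ) 1 := scale_mem (hB.1 k).2.1 hvk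
        have hum : (u - a k)/(b k - a k) ∈ Icc (0:ℝ) 1 := scale_mem (hB.1 k).2.1 huk
        rcases hcase with hc | hc
        · have : u = a k ∨ u = b k := by
            rcases eq_or_lt_of_le huk.1 with h1 | h1
            · exact Or.inl h1.symm
            · rcases eq_or_lt_of_le huk.2 with h2 | h2
              · exact Or.inr h2
              · exact absurd ⟨h1, h2⟩ hc
          rcases this with h | h
          · rw [heq, h, sub_self, zero_div, (hBk k).1 _ hvm]
            rw [min_eq_left (h ▸ hvk.1)]
            ring
          · rw [heq, h, div_self hne, (hBk k).2.2.2.1 _ hvm]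
            rw [min_eq_right (h ▸ hvk.2)]
            field_simp
            ring
        · have : v = a k ∨ v = b k := by
            rcases eq_or_lt_of_le hvk.1 with h1 | h1
            · exact Or.inl h1.symm
            · rcases eq_or_lt_of_le hvk.2 with h2 | h2
              · exact Or.inr h2
              · exact absurd ⟨h1, h2⟩ hc
          rcases this with h | h
          · rw [heq, h, sub_self, zero_div, (hBk k).2.1 _ hum]
            rw [min_eq_right (h ▸ huk.1)]
            ring
          · rw [heq, h, div_self hne, (hBk k).2.2.1 _ hum]
            rw [min_eq_left (h ▸ huk.2)]
            field_simp
            ring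
    · push_neg at hK
      exact hB.2.2.2 u hu v hv (fun k hk => (hK k hk.1) hk.2)


set_option maxHeartbeats 2000000 in
/-- Spearman's rho of an ordinal sum:
ρ(B) = 1 − Σ_k (b_k − a_k)³ (1 − ρ(B_k)). -/
theorem spearmanRho_ordinalSum {n : ℕ} (a b : Fin n → ℝ) (Bk : Fin n → ℝ → ℝ → ℝ)
    (B : ℝ → ℝ → ℝ) (hBk : ∀ k, IsCopula (Bk k)) (hB : IsOrdinalSum a b Bk B) :
    spearmanRho B = 1 - ∑ k, (b k - a k) ^ 3 * (1 - spearmanRho (Bk k)) := by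
  have hbounds : ∀ k : Fin n, 0 ≤ a k ∧ a k ≤ b k ∧ b k ≤ 1 := hB.1
  have inner : ∀ u ∈ Icc (0:ℝ) 1,
      ∫ v in (0:ℝ)..1, B u v = (u - u^2/2) + ∑ k, Eterm (a k) (b k) (Bk k) u := by
    intro u hu
    have hcong : ∫ v in (0:ℝ)..1, B u v
        = ∫ v in (0:ℝ)..1, (min u v + ∑ k, Dterm (a k) (b k) (Bk k) u v) := by
      apply intervalIntegral.integral_congr
      intro v hv
      rw [uIcc_of_le (by norm_num : (0:ℝ) ≤ 1)] at hv
      exact B_decomp hBk hB hu hv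
    have hDint : IntervalIntegrable (fun v => ∑ k, Dterm (a k) (b k) (Bk k) u v) volume 0 1 := by
      have := IntervalIntegrable.sum (μ := volume) (a := 0) (b := 1)
        (f := fun k v => Dterm (a k) (b k) (Bk k) u v) Finset.univ
        (fun k _ => Dterm_intInt (hBk k) (hbounds k).1 (hbounds k).2.1 (hbounds k).2.2 u)
      rwa [← Finset.sum_fn]
    have hadd : ∫ v in (0:ℝ)..1, (min u v + ∑ k, Dterm (a k) (b k) (Bk k) u v)
        = (∫ v in (0:ℝ)..1, min u v)
          + ∫ v in (0:ℝ)..1, ∑ k, Dterm (a k) (b k) (Bk k) u v :=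
      intervalIntegral.integral_add (f := fun v => min u v)
        (g := fun v => ∑ k, Dterm (a k) (b k) (Bk k) u v) (min_intInt u 0 1) hDint
    have hfs : ∫ v in (0:ℝ)..1, ∑ k, Dterm (a k) (b k) (Bk k) u v
        = ∑ k, ∫ v in (0:ℝ)..1, Dterm (a k) (b k) (Bk k) u v :=
      intervalIntegral.integral_finset_sum (f := fun k v => Dterm (a k) (b k) (Bk k) u v)
        (fun k _ => Dterm_intInt (hBk k) (hbounds k).1
          (hbounds k).2.1 (hbounds k).2.2 u)
    rw [hcong, hadd, hfs, min_integral hu]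
    congr 1
    exact Finset.sum_congr rfl (fun k _ => Dterm_integral_eq_Eterm (hBk k) (hbounds k).1
      (hbounds k).2.1 (hbounds k).2.2 u)
  have outer : ∫ u in (0:ℝ)..1, ∫ v in (0:ℝ)..1, B u v
      = 1/3 + ∑ k, (b k - a k)^3 * ((∫ w in (0:ℝ)..1, ∫ t in (0:ℝ)..1, Bk k w t) - 1/3) := by
    have hcong : ∫ u in (0:ℝ)..1, ∫ v in (0:ℝ)..1, B u v
        = ∫ u in (0:ℝ)..1, ((u - u^2/2) + ∑ k, Eterm (a k) (b k) (Bk k) u) := by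
      apply intervalIntegral.integral_congr
      intro u hu
      rw [uIcc_of_le (by norm_num : (0:ℝ) ≤ 1)] at hu
      exact inner u hu
    have hadd : ∫ u in (0:ℝ)..1, ((u - u^2/2) + ∑ k, Eterm (a k) (b k) (Bk k) u)
        = (∫ u in (0:ℝ)..1, (u - u^2/2))
          + ∫ u in (0:ℝ)..1, ∑ k, Eterm (a k) (b k) (Bk k) u :=
      intervalIntegral.integral_add (f := fun u : ℝ => u - u^2/2)
        (g := fun u => ∑ k, Eterm (a k) (b k) (Bk k) u)
        ((by fun_prop : Continuous fun u : ℝ => u - u^2/2).intervalIntegrable 0 1)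
        (by
          have := IntervalIntegrable.sum (μ := volume) (a := 0) (b := 1)
            (f := fun k u => Eterm (a k) (b k) (Bk k) u) Finset.univ
            (fun k _ => Eterm_intInt (hBk k) (hbounds k).1 (hbounds k).2.1 (hbounds k).2.2)
          rwa [← Finset.sum_fn])
    have hfs : ∫ u in (0:ℝ)..1, ∑ k, Eterm (a k) (b k) (Bk k) u
        = ∑ k, ∫ u in (0:ℝ)..1, Eterm (a k) (b k) (Bk k) u :=
      intervalIntegral.integral_finset_sum (f := fun k u => Eterm (a k) (b k) (Bk k) u)
        (fun k _ => Eterm_intInt (hBk k) (hbounds k).1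
          (hbounds k).2.1 (hbounds k).2.2)
    rw [hcong, hadd, hfs, min_double_integral]
    congr 1
    exact Finset.sum_congr rfl (fun k _ => Eterm_integral (hBk k) (hbounds k).1
      (hbounds k).2.1 (hbounds k).2.2)
  rw [spearmanRho, outer]
  have : ∑ k, (b k - a k) ^ 3 * (1 - spearmanRho (Bk k))
      = ∑ k, (-12) * ((b k - a k)^3 * ((∫ w in (0:ℝ)..1, ∫ t in (0:ℝ)..1, Bk k w t) - 1/3)) := by
    apply Finset.sum_congr rfl
    intro k _
    rw [spearmanRho]
    ring
  rw [this, ← Finset.mul_sum, mul_add]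
  ring
end

section
/- Let B be the ordinal sum of copulas B_1,…,B_n with respect to pairwise disjoint open subintervals (a_1,b_1),…,(a_n,b_n) of [0,1]. Then Spearman's footrule of B satisfies φ(B) = 1 − Σ_{k=1}^n (b_k − a_k)² · (1 − φ(B_k)). -/
open MeasureTheory Set

lemma copula_diag_mono {C : ℝ → ℝ → ℝ} (h : IsCopula C) :
    MonotoneOn (fun t => C t t) (Icc (0:ℝ) 1) := by
  obtain ⟨h0, h00, h1, h11, h2⟩ := h
  intro s hs t ht hst
  have e1 : C t 0 = 0 := h00 t ht
  have e2 : C s 0 = 0 := h00 s hs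
  have e3 : C 0 t = 0 := h0 t ht
  have e4 : C 0 s = 0 := h0 s hs
  have k1 := h2 s t 0 s hs.1 hst ht.2 le_rfl hs.1 hs.2
  have k2 := h2 0 t s t le_rfl ht.1 ht.2 hs.1 hst ht.2
  simp only at k1 k2 ⊢
  linarith

lemma phi_boundary {C : ℝ → ℝ → ℝ} (hC : IsCopula C) {A Bb u : ℝ}
    (hu : u ∈ Icc A Bb) (hnot : u ∉ Ioo A Bb) :
    A + (Bb - A) * C ((u - A) / (Bb - A)) ((u - A) / (Bb - A)) - u = 0 := by
  by_cases hAB : A = Bb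
  · have huA : u = A := le_antisymm (hu.2.trans (le_of_eq hAB.symm)) hu.1
    rw [huA, ← hAB, sub_self, zero_mul]; ring
  · have hlt : A < Bb := lt_of_le_of_ne (hu.1.trans hu.2) hAB
    have hne : Bb - A ≠ 0 := by intro h; apply hAB; linarith
    rcases le_or_gt u A with hle | hgt
    · have huA : u = A := le_antisymm hle hu.1
      rw [huA, sub_self, zero_div, hC.1 0 ⟨le_rfl, zero_le_one⟩]; ring
    · have huB : u = Bb := by
        by_contra hub
        exact hnot ⟨hgt, lt_of_le_of_ne hu.2 hub⟩
      rw [huB, div_self hne, hC.2.2.1 1 ⟨zero_le_one, le_rfl⟩]; ring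

lemma ordinal_piece {C : ℝ → ℝ → ℝ} (hC : IsCopula C) {A Bb : ℝ}
    (h0A : 0 ≤ A) (hABb : A ≤ Bb) (hB1 : Bb ≤ 1) :
    (∫ u in (0:ℝ)..1, (Icc A Bb).indicator
        (fun u => A + (Bb - A) * C ((u - A) / (Bb - A)) ((u - A) / (Bb - A)) - u) u)
      = (Bb - A) ^ 2 * ((∫ t in (0:ℝ)..1, C t t) - 1 / 2) ∧
    IntervalIntegrable ((Icc A Bb).indicator
        (fun u => A + (Bb - A) * C ((u - A) / (Bb - A)) ((u - A) / (Bb - A)) - u)) volume 0 1 := by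
  set X : ℝ → ℝ := fun u => C ((u - A) / (Bb - A)) ((u - A) / (Bb - A)) with hX
  set φ : ℝ → ℝ := fun u => A + (Bb - A) * X u - u with hφ
  by_cases hdeg : A = Bb
  · have hzero : (Icc A Bb).indicator φ = fun _ => (0:ℝ) := by
      funext u
      by_cases hm : u ∈ Icc A Bb
      · rw [indicator_of_mem hm]
        exact phi_boundary hC hm (by rw [← hdeg]; simp)
      · exact indicator_of_notMem hm _
    rw [hzero, ← hdeg, sub_self]
    constructor
    · simp
    · simp [intervalIntegrable_const]
  · have hlt : A < Bb := lt_of_le_of_ne hABb hdeg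
    have hpos : 0 < Bb - A := by linarith
    have hne : Bb - A ≠ 0 := ne_of_gt hpos
    have hmono : MonotoneOn X (Icc A Bb) := by
      intro x hx y hy hxy
      have hx' : (x - A) / (Bb - A) ∈ Icc (0:ℝ) 1 :=
        ⟨div_nonneg (by linarith [hx.1]) hpos.le, by rw [div_le_one hpos]; linarith [hx.2]⟩
      have hy' : (y - A) / (Bb - A) ∈ Icc (0:ℝ) 1 :=
        ⟨div_nonneg (by linarith [hy.1]) hpos.le, by rw [div_le_one hpos]; linarith [hy.2]⟩
      exact copula_diag_mono hC hx' hy' (by gcongr)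
    have hXint : IntegrableOn X (Icc A Bb) volume :=
      hmono.integrableOn_isCompact isCompact_Icc
    have hXii : IntervalIntegrable X volume A Bb :=
      IntegrableOn.intervalIntegrable (by rwa [uIcc_of_le hABb])
    have hφint : IntegrableOn φ (Icc A Bb) volume := by
      apply Integrable.sub
      · exact ((integrableOn_const measure_Icc_lt_top.ne).add (hXint.const_mul _))
      · exact continuous_id.continuousOn.integrableOn_Icc
    have hgI : Integrable ((Icc A Bb).indicator φ) volume :=
      hφint.integrable_indicator measurableSet_Icc
    refine ⟨?_, hgI.intervalIntegrable⟩
    have e0A : (∫ u in (0:ℝ)..A, (Icc A Bb).indicator φ u) = 0 := by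
      rw [intervalIntegral.integral_congr (g := fun _ => (0:ℝ)) ?_, intervalIntegral.integral_zero]
      intro u hu
      rw [uIcc_of_le h0A] at hu
      by_cases hm : u ∈ Icc A Bb
      · have huA : u = A := le_antisymm hu.2 hm.1
        rw [indicator_of_mem hm]
        exact phi_boundary hC hm (by rw [huA]; exact fun h => lt_irrefl _ h.1)
      · exact indicator_of_notMem hm _
    have eB1 : (∫ u in Bb..(1:ℝ), (Icc A Bb).indicator φ u) = 0 := by
      rw [intervalIntegral.integral_congr (g := fun _ => (0:ℝ)) ?_, intervalIntegral.integral_zero]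
      intro u hu
      rw [uIcc_of_le hB1] at hu
      by_cases hm : u ∈ Icc A Bb
      · have huB : u = Bb := le_antisymm hm.2 hu.1
        rw [indicator_of_mem hm]
        exact phi_boundary hC hm (by rw [huB]; exact fun h => lt_irrefl _ h.2)
      · exact indicator_of_notMem hm _
    have eAB : (∫ u in A..Bb, (Icc A Bb).indicator φ u) = ∫ u in A..Bb, φ u := by
      apply intervalIntegral.integral_congr
      intro u hu
      rw [uIcc_of_le hABb] at hu
      exact indicator_of_mem hu _
    have esub : (∫ u in A..Bb, X u) = (Bb - A) * ∫ t in (0:ℝ)..1, C t t := by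
      have e1 : (∫ u in A..Bb, X u)
          = ∫ x in (A - A)..(Bb - A), C (x / (Bb - A)) (x / (Bb - A)) :=
        intervalIntegral.integral_comp_sub_right (fun x => C (x / (Bb - A)) (x / (Bb - A))) A
      rw [e1, sub_self,
        intervalIntegral.integral_comp_div (c := Bb - A) (f := fun t => C t t) hne,
        zero_div, div_self hne]
      simp
    have eφ : (∫ u in A..Bb, φ u) = (Bb - A) ^ 2 * ((∫ t in (0:ℝ)..1, C t t) - 1 / 2) := by
      rw [hφ]
      rw [intervalIntegral.integral_sub
        (intervalIntegrable_const.add (hXii.const_mul _)) intervalIntegral.intervalIntegrable_id]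
      rw [intervalIntegral.integral_add intervalIntegrable_const (hXii.const_mul _)]
      rw [intervalIntegral.integral_const_mul, intervalIntegral.integral_const,
        _root_.integral_id, esub, smul_eq_mul]
      ring
    have split : (∫ u in (0:ℝ)..1, (Icc A Bb).indicator φ u)
        = (∫ u in (0:ℝ)..A, (Icc A Bb).indicator φ u)
          + ((∫ u in A..Bb, (Icc A Bb).indicator φ u)
            + (∫ u in Bb..(1:ℝ), (Icc A Bb).indicator φ u)) := by
      rw [intervalIntegral.integral_add_adjacent_intervals
          hgI.intervalIntegrable hgI.intervalIntegrable,
        intervalIntegral.integral_add_adjacent_intervals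
          hgI.intervalIntegrable hgI.intervalIntegrable]
    rw [split, e0A, eB1, eAB, eφ]
    ring
/-- Spearman's footrule of an ordinal sum:
φ(B) = 1 − Σ_k (b_k − a_k)² (1 − φ(B_k)). -/
theorem footrule_ordinalSum {n : ℕ} (a b : Fin n → ℝ) (Bk : Fin n → ℝ → ℝ → ℝ)
    (B : ℝ → ℝ → ℝ) (hBk : ∀ k, IsCopula (Bk k)) (hB : IsOrdinalSum a b Bk B) :
    footrule B = 1 - ∑ k, (b k - a k) ^ 2 * (1 - footrule (Bk k)) := by

  classical
  obtain ⟨hab, hdisj, hin, hout⟩ := hB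
  set g : Fin n → ℝ → ℝ := fun k => (Icc (a k) (b k)).indicator
    (fun u => a k + (b k - a k) * Bk k ((u - a k) / (b k - a k)) ((u - a k) / (b k - a k)) - u)
    with hg
  have hpiece := fun k => ordinal_piece (hBk k) (hab k).1 (hab k).2.1 (hab k).2.2
  have hgint : ∀ k, IntervalIntegrable (g k) volume 0 1 := fun k => (hpiece k).2
  have hgval : ∀ k, (∫ u in (0:ℝ)..1, g k u)
      = (b k - a k) ^ 2 * ((∫ t in (0:ℝ)..1, Bk k t t) - 1 / 2) := fun k => (hpiece k).1
  have hkey : ∀ u ∈ Icc (0:ℝ) 1, B u u = u + ∑ k, g k u := by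
    intro u hu
    by_cases hex : ∃ k, u ∈ Ioo (a k) (b k)
    · obtain ⟨k, hk⟩ := hex
      have huk : u ∈ Icc (a k) (b k) := Ioo_subset_Icc_self hk
      have hsum : ∑ j, g j u = g k u := by
        apply Finset.sum_eq_single
        · intro j _ hjk
          by_cases hj : u ∈ Icc (a j) (b j)
          · have hnj : u ∉ Ioo (a j) (b j) := fun hmem =>
              Set.disjoint_left.mp (hdisj hjk) hmem hk
            simp only [hg]
            rw [Set.indicator_of_mem hj]
            exact phi_boundary (hBk j) hj hnj
          · exact Set.indicator_of_notMem hj _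
        · intro h; exact absurd (Finset.mem_univ k) h
      rw [hsum]
      simp only [hg]
      rw [Set.indicator_of_mem huk, hin k u huk u huk]
      ring
    · push_neg at hex
      have hz : ∀ j, g j u = 0 := by
        intro j
        by_cases hj : u ∈ Icc (a j) (b j)
        · simp only [hg]
          rw [Set.indicator_of_mem hj]
          exact phi_boundary (hBk j) hj (hex j)
        · exact Set.indicator_of_notMem hj _
      rw [Finset.sum_eq_zero (fun j _ => hz j), add_zero]
      by_cases hic : ∃ k, u ∈ Icc (a k) (b k)
      · obtain ⟨k, hk⟩ := hic
        rw [hin k u hk u hk]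
        have := phi_boundary (hBk k) hk (hex k)
        linarith
      · push_neg at hic
        rw [hout u hu u hu (fun k hmem => hic k hmem.1), min_self]
  have hBint : (∫ u in (0:ℝ)..1, B u u)
      = 1 / 2 + ∑ k, (b k - a k) ^ 2 * ((∫ t in (0:ℝ)..1, Bk k t t) - 1 / 2) := by
    have e1 : (∫ u in (0:ℝ)..1, B u u) = ∫ u in (0:ℝ)..1, (u + ∑ k, g k u) := by
      apply intervalIntegral.integral_congr
      intro u hu
      rw [uIcc_of_le zero_le_one] at hu
      exact hkey u hu
    have hsint : IntervalIntegrable (fun u => ∑ k, g k u) volume 0 1 := by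
      have := IntervalIntegrable.sum (μ := volume) (a := (0:ℝ)) (b := 1)
        Finset.univ (fun k _ => hgint k)
      have he : (∑ i : Fin n, g i) = fun u => ∑ k : Fin n, g k u := by
        funext u; simp
      rwa [he] at this
    rw [e1, intervalIntegral.integral_add intervalIntegral.intervalIntegrable_id hsint,
      intervalIntegral.integral_finset_sum (fun k _ => hgint k), _root_.integral_id,
      Finset.sum_congr rfl (fun k _ => hgval k)]
    norm_num
  simp only [footrule]
  rw [hBint]
  have hterm : ∀ k : Fin n, (b k - a k) ^ 2 * (1 - (6 * (∫ u in (0:ℝ)..1, Bk k u u) - 2))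
      = -(6 * ((b k - a k) ^ 2 * ((∫ t in (0:ℝ)..1, Bk k t t) - 1 / 2))) := fun k => by ring
  rw [Finset.sum_congr rfl (fun k _ => hterm k), Finset.sum_neg_distrib, ← Finset.mul_sum]
  ring
end

section
/- Let B be the ordinal sum of copulas B_1,…,B_n with respect to pairwise disjoint open subintervals (a_1,b_1),…,(a_n,b_n) of [0,1]. Suppose 1/2 ∈ (a_j, b_j) for some j ∈ {1,…,n}, and set c = (1 − a_j − b_j)/(b_j − a_j) ∈ (−1,1). Then Gini's gamma of B satisfies γ(B) = 4(b_j − a_j)²·max{0,c}² + 4a_j − 4a_j² − (2/3)·Σ_{k=1}^n (b_k − a_k)²·(1 − φ(B_k)) + 4(b_j − a_j)²·∫_{max{0,c}}^{1 + min{0,c}} B_j(t, 1 + c − t) dt, where φ denotes Spearman's footrule. In particular, if a_j + b_j = 1 then γ(B) = 1 − (b_j − a_j)²·(1 − γ(B_j)) − (2/3)·Σ_{k≠j} (b_k − a_k)²·(1 − φ(B_k)). -/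
open MeasureTheory Set

lemma IsCopula.incr_fst {C : ℝ → ℝ → ℝ} (h : IsCopula C) {u₁ u₂ v : ℝ}
    (hv : v ∈ Icc (0:ℝ) 1) (h0 : 0 ≤ u₁) (h12 : u₁ ≤ u₂) (h1 : u₂ ≤ 1) :
    C u₁ v ≤ C u₂ v ∧ C u₂ v - C u₁ v ≤ u₂ - u₁ := by
  obtain ⟨h0v, hu0, hu1, h1v, hrect⟩ := h
  have hm1 : u₁ ∈ Icc (0:ℝ) 1 := ⟨h0, h12.trans h1⟩
  have hm2 : u₂ ∈ Icc (0:ℝ) 1 := ⟨h0.trans h12, h1⟩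
  constructor
  · have := hrect u₁ u₂ 0 v h0 h12 h1 le_rfl hv.1 hv.2
    rw [hu0 u₁ hm1, hu0 u₂ hm2] at this; linarith
  · have := hrect u₁ u₂ v 1 h0 h12 h1 hv.1 hv.2 le_rfl
    rw [hu1 u₁ hm1, hu1 u₂ hm2] at this; linarith

lemma IsCopula.incr_snd {C : ℝ → ℝ → ℝ} (h : IsCopula C) {v₁ v₂ u : ℝ}
    (hu : u ∈ Icc (0:ℝ) 1) (h0 : 0 ≤ v₁) (h12 : v₁ ≤ v₂) (h1 : v₂ ≤ 1) :
    C u v₁ ≤ C u v₂ ∧ C u v₂ - C u v₁ ≤ v₂ - v₁ := by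
  obtain ⟨h0v, hu0, hu1, h1v, hrect⟩ := h
  have hm1 : v₁ ∈ Icc (0:ℝ) 1 := ⟨h0, h12.trans h1⟩
  have hm2 : v₂ ∈ Icc (0:ℝ) 1 := ⟨h0.trans h12, h1⟩
  constructor
  · have := hrect 0 u v₁ v₂ le_rfl hu.1 hu.2 h0 h12 h1
    rw [h0v v₁ hm1, h0v v₂ hm2] at this; linarith
  · have := hrect u 1 v₁ v₂ hu.1 hu.2 le_rfl h0 h12 h1
    rw [h1v v₁ hm1, h1v v₂ hm2] at this; linarith

lemma IsCopula.abs_diff_le {C : ℝ → ℝ → ℝ} (h : IsCopula C) {u v u' v' : ℝ}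
    (hu : u ∈ Icc (0:ℝ) 1) (hv : v ∈ Icc (0:ℝ) 1)
    (hu' : u' ∈ Icc (0:ℝ) 1) (hv' : v' ∈ Icc (0:ℝ) 1) :
    |C u v - C u' v'| ≤ |u - u'| + |v - v'| := by
  have h1 : |C u v - C u' v| ≤ |u - u'| := by
    rcases le_total u' u with hle | hle
    · obtain ⟨ha, hb⟩ := h.incr_fst hv hu'.1 hle hu.2
      rw [abs_of_nonneg (by linarith), abs_of_nonneg (by linarith)]; exact hb
    · obtain ⟨ha, hb⟩ := h.incr_fst hv hu.1 hle hu'.2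
      rw [abs_sub_comm, abs_sub_comm u u', abs_of_nonneg (by linarith),
        abs_of_nonneg (by linarith)]
      exact hb
  have h2 : |C u' v - C u' v'| ≤ |v - v'| := by
    rcases le_total v' v with hle | hle
    · obtain ⟨ha, hb⟩ := h.incr_snd hu' hv'.1 hle hv.2
      rw [abs_of_nonneg (by linarith), abs_of_nonneg (by linarith)]; exact hb
    · obtain ⟨ha, hb⟩ := h.incr_snd hu' hv.1 hle hv'.2
      rw [abs_sub_comm, abs_sub_comm v v', abs_of_nonneg (by linarith),
        abs_of_nonneg (by linarith)]
      exact hb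
  calc |C u v - C u' v'| ≤ |C u v - C u' v| + |C u' v - C u' v'| := abs_sub_le _ _ _
    _ ≤ |u - u'| + |v - v'| := add_le_add h1 h2

lemma IsCopula.continuousOn_comp {C : ℝ → ℝ → ℝ} (h : IsCopula C) {f g : ℝ → ℝ}
    (hf : Continuous f) (hg : Continuous g) {s : Set ℝ}
    (hfs : ∀ x ∈ s, f x ∈ Icc (0:ℝ) 1) (hgs : ∀ x ∈ s, g x ∈ Icc (0:ℝ) 1) :
    ContinuousOn (fun t => C (f t) (g t)) s := by
  have lip : LipschitzOnWith 2 (fun p : ℝ × ℝ => C p.1 p.2)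
      ((Icc 0 1 ×ˢ Icc 0 1 : Set (ℝ × ℝ))) := by
    rw [lipschitzOnWith_iff_dist_le_mul]
    rintro ⟨u, v⟩ hp ⟨u', v'⟩ hp'
    have hu : u ∈ Icc (0:ℝ) 1 := hp.1
    have hv : v ∈ Icc (0:ℝ) 1 := hp.2
    have hu' : u' ∈ Icc (0:ℝ) 1 := hp'.1
    have hv' : v' ∈ Icc (0:ℝ) 1 := hp'.2
    have key : |C u v - C u' v'| ≤ |u - u'| + |v - v'| := h.abs_diff_le hu hv hu' hv'
    simp only [Real.dist_eq, Prod.dist_eq, NNReal.coe_ofNat]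
    have h1 : |u - u'| ≤ max |u - u'| |v - v'| := le_max_left _ _
    have h2 : |v - v'| ≤ max |u - u'| |v - v'| := le_max_right _ _
    calc |C u v - C u' v'| ≤ |u - u'| + |v - v'| := key
      _ ≤ 2 * max |u - u'| |v - v'| := by linarith
  have hmaps : MapsTo (fun t => (f t, g t)) s (Icc 0 1 ×ˢ Icc 0 1) := by
    intro x hx
    exact Set.mem_prod.mpr ⟨hfs x hx, hgs x hx⟩
  exact lip.continuousOn.comp (hf.prodMk hg).continuousOn hmaps

lemma integral_comp_affine {F : ℝ → ℝ} {h : ℝ} (hh : h ≠ 0) (a p q : ℝ) :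
    (∫ u in p..q, F ((u - a)/h)) = h * ∫ t in (p-a)/h..(q-a)/h, F t := by
  have e1 : (∫ u in p..q, F ((u - a)/h)) = ∫ x in p - a..q - a, F (x / h) :=
    intervalIntegral.integral_comp_sub_right (fun x => F (x/h)) a
  have e2 : (∫ x in p - a..q - a, F (x / h)) = h • ∫ t in (p-a)/h..(q-a)/h, F t :=
    intervalIntegral.integral_comp_div _ hh
  rw [e1, e2, smul_eq_mul]

set_option maxHeartbeats 4000000 in
/-- Gini's gamma of an ordinal sum when 1/2 ∈ (a_j, b_j), with
c = (1 − a_j − b_j)/(b_j − a_j); together with the special case a_j + b_j = 1. -/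
theorem giniGamma_ordinalSum_of_half_mem {n : ℕ} (a b : Fin n → ℝ)
    (Bk : Fin n → ℝ → ℝ → ℝ) (B : ℝ → ℝ → ℝ)
    (hBk : ∀ k, IsCopula (Bk k)) (hB : IsOrdinalSum a b Bk B)
    (j : Fin n) (hj : (1:ℝ)/2 ∈ Ioo (a j) (b j))
    (c : ℝ) (hc : c = (1 - a j - b j) / (b j - a j)) :
    giniGamma B = 4 * (b j - a j) ^ 2 * (max 0 c) ^ 2 + 4 * a j - 4 * (a j) ^ 2
        - (2/3) * ∑ k, (b k - a k) ^ 2 * (1 - footrule (Bk k))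
        + 4 * (b j - a j) ^ 2 * ∫ t in (max 0 c)..(1 + min 0 c), Bk j t (1 + c - t) ∧
      (a j + b j = 1 →
        giniGamma B = 1 - (b j - a j) ^ 2 * (1 - giniGamma (Bk j))
          - (2/3) * ∑ k ∈ Finset.univ.erase j, (b k - a k) ^ 2 * (1 - footrule (Bk k))) := by
  classical
  obtain ⟨hab, hdisj, hform, hmin⟩ := hB
  have hj1 : a j < 1/2 := hj.1
  have hj2 : (1:ℝ)/2 < b j := hj.2
  have h0 : (0:ℝ) < b j - a j := by linarith
  have hne : b j - a j ≠ 0 := ne_of_gt h0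
  have haj0 : 0 ≤ a j := (hab j).1
  have hbj1 : b j ≤ 1 := (hab j).2.2
  have hcl : c < 1 := by rw [hc, div_lt_one h0]; linarith
  have hcg : -1 < c := by rw [hc, lt_div_iff₀ h0]; linarith
  have hch : c * (b j - a j) = 1 - a j - b j := by rw [hc]; field_simp
  have hMm : max 0 c + min 0 c = c := by
    rcases le_total c 0 with h' | h'
    · rw [max_eq_left h', min_eq_right h', zero_add]
    · rw [max_eq_right h', min_eq_left h', add_zero]
  have hM0 : 0 ≤ max 0 c := le_max_left _ _
  have hm0 : min 0 c ≤ 0 := min_le_left _ _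
  have hMle : max 0 c ≤ 1 + min 0 c := by
    rcases le_total c 0 with h' | h'
    · rw [max_eq_left h', min_eq_right h']; linarith
    · rw [max_eq_right h', min_eq_left h']; linarith
  set L := max (a j) (1 - b j) with hLdef
  set U := min (b j) (1 - a j) with hUdef
  have h1b : 1 - b j = a j + (b j - a j) * c := by linear_combination -hch
  have hL : L = a j + (b j - a j) * max 0 c := by
    rcases le_total c 0 with h' | h'
    · rw [hLdef, max_eq_left h', max_eq_left (by nlinarith : 1 - b j ≤ a j), mul_zero, add_zero]
    · rw [hLdef, max_eq_right h', max_eq_right (by nlinarith : a j ≤ 1 - b j), h1b]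
  have hU : U = a j + (b j - a j) * (1 + min 0 c) := by
    rcases le_total c 0 with h' | h'
    · rw [hUdef, min_eq_right h', min_eq_right (by nlinarith : 1 - a j ≤ b j)]
      linear_combination -hch
    · rw [hUdef, min_eq_left h', min_eq_left (by nlinarith : b j ≤ 1 - a j), add_zero]
      ring
  have hL0 : 0 ≤ L := le_trans haj0 (le_max_left _ _)
  have hU1 : U ≤ 1 := le_trans (min_le_right _ _) (by linarith)
  have hLhalf : L ≤ 1/2 := max_le (by linarith) (by linarith)
  have hUhalf : 1/2 ≤ U := le_min (by linarith) (by linarith)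
  have hLU : L ≤ U := hLhalf.trans hUhalf
  have hLM : (L - a j)/(b j - a j) = max 0 c := by rw [hL]; field_simp; ring
  have hUM : (U - a j)/(b j - a j) = 1 + min 0 c := by rw [hU]; field_simp; ring
  have h1U : 1 - U = L := by
    rw [hL, hU]; linear_combination (-(b j - a j)) * hMm - hch
  have hcorner1 : a j + (b j - a j) * Bk j (max 0 c) (1 + min 0 c) = L := by
    rcases le_total c 0 with h' | h'
    · rw [min_eq_right h', max_eq_left h',
        (hBk j).1 (1 + c) ⟨by linarith, by linarith⟩, mul_zero, add_zero,
        hL, max_eq_left h', mul_zero, add_zero]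
    · rw [min_eq_left h', max_eq_right h', add_zero,
        (hBk j).2.2.1 c ⟨h', le_of_lt hcl⟩, hL, max_eq_right h']
  have hcorner2 : a j + (b j - a j) * Bk j (1 + min 0 c) (max 0 c) = L := by
    rcases le_total c 0 with h' | h'
    · rw [min_eq_right h', max_eq_left h',
        (hBk j).2.1 (1 + c) ⟨by linarith, by linarith⟩, mul_zero, add_zero,
        hL, max_eq_left h', mul_zero, add_zero]
    · rw [min_eq_left h', max_eq_right h', add_zero,
        (hBk j).2.2.2.1 c ⟨h', le_of_lt hcl⟩, hL, max_eq_right h']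
  -- the antidiagonal piecewise description
  set G : ℝ → ℝ := fun u => if u ∈ Icc L U then
      a j + (b j - a j) * Bk j ((u - a j)/(b j - a j)) ((1 - u - a j)/(b j - a j))
    else min u (1 - u) with hG
  have key2 : ∀ u ∈ Icc (0:ℝ) 1, B u (1 - u) = G u := by
    intro u hu
    simp only [hG]
    split_ifs with hmem
    · exact hform j u ⟨le_trans (le_max_left _ _) hmem.1, le_trans hmem.2 (min_le_left _ _)⟩
        (1 - u) ⟨by linarith [hmem.2, min_le_right (b j) (1 - a j)],
          by linarith [hmem.1, le_max_right (a j) (1 - b j)]⟩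
    · apply hmin u hu (1 - u) ⟨by linarith [hu.2], by linarith [hu.1]⟩
      intro k hk
      obtain ⟨hk1, hk2⟩ := hk
      by_cases hkj : k = j
      · subst hkj
        exact hmem ⟨max_le hk1.1 (by linarith [hk2.2]), le_min hk1.2 (by linarith [hk2.1])⟩
      · rcases lt_or_ge (a k) (b k) with hlt | hle
        · have hnon : (Ioo (a k) (b k) ∩ Ioo (a j) (b j)).Nonempty := by
            rw [Set.Ioo_inter_Ioo]
            apply Set.nonempty_Ioo.mpr
            simp only [sup_lt_iff, lt_inf_iff]
            refine ⟨⟨hlt, by linarith [hk1.2, hk2.2]⟩, ⟨by linarith [hk1.1, hk2.1], by linarith⟩⟩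
          obtain ⟨p, hp1, hp2⟩ := hnon
          exact Set.disjoint_left.mp (hdisj hkj) hp1 hp2
        · have hk05 : u = 1/2 := by
            have h1 := hk1.1; have h2 := hk1.2
            have h3 := hk2.1; have h4 := hk2.2
            linarith
          exact hmem ⟨by rw [hk05]; exact hLhalf, by rw [hk05]; exact hUhalf⟩
  -- EqOn descriptions of G on the three pieces
  have e1' : EqOn G (fun u => u) (uIcc 0 L) := by
    rw [uIcc_of_le hL0]
    intro u hu
    simp only [hG]
    split_ifs with hmem
    · have huL : u = L := le_antisymm hu.2 hmem.1
      rw [huL, hLM]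
      have hd2 : (1 - L - a j)/(b j - a j) = 1 + min 0 c := by
        rw [div_eq_iff hne, hL]
        linear_combination (-(b j - a j)) * hMm - hch
      rw [hd2]
      exact hcorner1
    · exact min_eq_left (by linarith [hu.2, hLhalf])
  have e3' : EqOn G (fun u => 1 - u) (uIcc U 1) := by
    rw [uIcc_of_le hU1]
    intro u hu
    simp only [hG]
    split_ifs with hmem
    · have huU : u = U := le_antisymm hmem.2 hu.1
      rw [huU, hUM]
      have hd2 : (1 - U - a j)/(b j - a j) = max 0 c := by
        rw [div_eq_iff hne, hU]
        linear_combination (-(b j - a j)) * hMm - hch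
      rw [hd2, hcorner2]
      exact h1U.symm
    · exact min_eq_right (by linarith [hu.1, hUhalf])
  have e2' : EqOn G (fun u => (fun t => a j + (b j - a j) * Bk j t (1 + c - t))
      ((u - a j)/(b j - a j))) (uIcc L U) := by
    rw [uIcc_of_le hLU]
    intro u hu
    simp only [hG, if_pos hu]
    have harg : (1 - u - a j)/(b j - a j) = 1 + c - (u - a j)/(b j - a j) := by
      field_simp
      linear_combination -hch
    rw [harg]
  -- integrability facts
  have hmapA : ∀ x ∈ Icc (max 0 c) (1 + min 0 c), x ∈ Icc (0:ℝ) 1 :=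
    fun x hx => ⟨le_trans hM0 hx.1, le_trans hx.2 (by linarith)⟩
  have hmapB : ∀ x ∈ Icc (max 0 c) (1 + min 0 c), 1 + c - x ∈ Icc (0:ℝ) 1 :=
    fun x hx => ⟨by linarith [hMm, hM0, hx.2], by linarith [hMm, hm0, hx.1]⟩
  have hIcont : ContinuousOn (fun t => Bk j t (1 + c - t)) (Icc (max 0 c) (1 + min 0 c)) :=
    (hBk j).continuousOn_comp continuous_id (continuous_const.sub continuous_id) hmapA hmapB
  have hIint : IntervalIntegrable (fun t => Bk j t (1 + c - t)) volume
      (max 0 c) (1 + min 0 c) := by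
    apply ContinuousOn.intervalIntegrable
    rwa [uIcc_of_le hMle]
  have hFc : ContinuousOn (fun t : ℝ => a j + (b j - a j) * Bk j t (1 + c - t))
      (Icc (max 0 c) (1 + min 0 c)) := continuousOn_const.add (continuousOn_const.mul hIcont)
  have hmapsLU : ∀ u ∈ uIcc L U, (u - a j)/(b j - a j) ∈ Icc (max 0 c) (1 + min 0 c) := by
    rw [uIcc_of_le hLU]
    intro u hu
    constructor
    · rw [le_div_iff₀ h0]; linarith [hL, hu.1]
    · rw [div_le_iff₀ h0]; linarith [hU, hu.2]
  have hFc' : ContinuousOn (fun u => (fun t => a j + (b j - a j) * Bk j t (1 + c - t))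
      ((u - a j)/(b j - a j))) (uIcc L U) :=
    hFc.comp ((continuous_id.sub continuous_const).div_const _).continuousOn hmapsLU
  have i1' : IntervalIntegrable G volume 0 L :=
    ((continuous_id'.continuousOn).congr e1').intervalIntegrable
  have i2' : IntervalIntegrable G volume L U := (hFc'.congr e2').intervalIntegrable
  have i3' : IntervalIntegrable G volume U 1 :=
    (((continuous_const.sub continuous_id').continuousOn).congr e3').intervalIntegrable
  -- the three pieces
  have vv1 : (∫ u in (0:ℝ)..L, G u) = L^2/2 := by
    rw [intervalIntegral.integral_congr e1', integral_id]
    ring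
  have vv3 : (∫ u in U..(1:ℝ), G u) = L^2/2 := by
    rw [intervalIntegral.integral_congr e3']
    have comp : (∫ u in U..(1:ℝ), (fun x : ℝ => x) (1 - u)) = ∫ x in ((1:ℝ)-1)..(1-U), x :=
      intervalIntegral.integral_comp_sub_left (fun x : ℝ => x) 1
    have : (∫ u in U..(1:ℝ), 1 - u) = ∫ x in ((1:ℝ)-1)..(1-U), x := comp
    rw [this, integral_id, h1U]
    norm_num
  have vv2 : (∫ u in L..U, G u) =
      (b j - a j) * ((1 + min 0 c - max 0 c) * a j +
        (b j - a j) * ∫ t in (max 0 c)..(1 + min 0 c), Bk j t (1 + c - t)) := by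
    have hsubst := integral_comp_affine
      (F := fun t => a j + (b j - a j) * Bk j t (1 + c - t)) hne (a j) L U
    rw [intervalIntegral.integral_congr e2']
    rw [hsubst, hLM, hUM]
    congr 1
    have hadd : (∫ t in (max 0 c)..(1 + min 0 c),
        (a j + (b j - a j) * Bk j t (1 + c - t))) =
        (∫ t in (max 0 c)..(1 + min 0 c), a j) +
          ∫ t in (max 0 c)..(1 + min 0 c), (b j - a j) * Bk j t (1 + c - t) :=
      intervalIntegral.integral_add intervalIntegrable_const (hIint.const_mul _)
    rw [hadd, intervalIntegral.integral_const, intervalIntegral.integral_const_mul, smul_eq_mul]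
  have hAint : (∫ u in (0:ℝ)..1, B u (1 - u)) = L^2/2 +
      (b j - a j) * ((1 + min 0 c - max 0 c) * a j +
        (b j - a j) * ∫ t in (max 0 c)..(1 + min 0 c), Bk j t (1 + c - t)) + L^2/2 := by
    have hcongr : (∫ u in (0:ℝ)..1, B u (1 - u)) = ∫ u in (0:ℝ)..1, G u :=
      intervalIntegral.integral_congr fun u hu =>
        key2 u (by rwa [uIcc_of_le zero_le_one] at hu)
    rw [hcongr, ← intervalIntegral.integral_add_adjacent_intervals (i1'.trans i2') i3',
      ← intervalIntegral.integral_add_adjacent_intervals i1' i2', vv1, vv2, vv3]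
  -- diagonal part
  set gk : Fin n → ℝ → ℝ := fun k u => if u ∈ Icc (a k) (b k) then
      (b k - a k) * (Bk k ((u - a k)/(b k - a k)) ((u - a k)/(b k - a k)) - (u - a k)/(b k - a k))
    else 0 with hgk
  have gzero : ∀ k u, u ∉ Ioo (a k) (b k) → gk k u = 0 := by
    intro k u hnin
    by_cases hmem : u ∈ Icc (a k) (b k)
    · rcases eq_or_lt_of_le (hab k).2.1 with heq | hlt
      · simp only [hgk, if_pos hmem, ← heq, sub_self, zero_mul]
      · have hne0 : b k - a k ≠ 0 := ne_of_gt (by linarith)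
        have hend : u = a k ∨ u = b k := by
          rcases eq_or_lt_of_le hmem.1 with h' | h'
          · exact Or.inl h'.symm
          rcases eq_or_lt_of_le hmem.2 with h' | h''
          · exact Or.inr h'
          · exact absurd ⟨h', h''⟩ hnin
        rcases hend with h' | h'
        · simp only [hgk, if_pos hmem, h', sub_self, zero_div,
            (hBk k).1 0 ⟨le_rfl, zero_le_one⟩]
          simp
        · simp only [hgk, if_pos hmem, h', div_self hne0,
            (hBk k).2.2.1 1 ⟨zero_le_one, le_rfl⟩]
          simp
    · simp only [hgk, if_neg hmem]
  have key1 : ∀ u ∈ Icc (0:ℝ) 1, B u u = u + ∑ k, gk k u := by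
    intro u hu
    by_cases hex : ∃ k, u ∈ Ioo (a k) (b k)
    · obtain ⟨k0, hk0⟩ := hex
      have hk0lt : a k0 < b k0 := lt_trans hk0.1 hk0.2
      have hne0 : b k0 - a k0 ≠ 0 := ne_of_gt (by linarith)
      have hsum : ∑ k, gk k u = gk k0 u := by
        apply Finset.sum_eq_single_of_mem k0 (Finset.mem_univ _)
        intro k _ hkk
        apply gzero
        intro hmem
        exact Set.disjoint_left.mp (hdisj hkk) hmem hk0
      have hmem0 : u ∈ Icc (a k0) (b k0) := Ioo_subset_Icc_self hk0
      rw [hsum, hform k0 u hmem0 u hmem0]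
      simp only [hgk, if_pos hmem0]
      have ht : (b k0 - a k0) * ((u - a k0)/(b k0 - a k0)) = u - a k0 :=
        mul_div_cancel₀ _ hne0
      linear_combination ht
    · push_neg at hex
      have hsum : ∑ k, gk k u = 0 := Finset.sum_eq_zero fun k _ => gzero k u (hex k)
      rw [hsum, add_zero]
      by_cases hmem : ∃ k, u ∈ Icc (a k) (b k)
      · obtain ⟨k, hk⟩ := hmem
        rw [hform k u hk u hk]
        rcases eq_or_lt_of_le (hab k).2.1 with heq | hlt
        · rw [← heq, sub_self, zero_mul, add_zero]
          have h1 := hk.1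
          have h2 := hk.2
          rw [← heq] at h2
          linarith
        · have hne0 : b k - a k ≠ 0 := ne_of_gt (by linarith)
          have hend : u = a k ∨ u = b k := by
            rcases eq_or_lt_of_le hk.1 with h' | h'
            · exact Or.inl h'.symm
            rcases eq_or_lt_of_le hk.2 with h' | h''
            · exact Or.inr h'
            · exact absurd ⟨h', h''⟩ (hex k)
          rcases hend with h' | h'
          · rw [h', sub_self, zero_div, (hBk k).1 0 ⟨le_rfl, zero_le_one⟩, mul_zero, add_zero]
          · rw [h', div_self hne0, (hBk k).2.2.1 1 ⟨zero_le_one, le_rfl⟩, mul_one]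
            ring
      · push_neg at hmem
        rw [hmin u hu u hu fun k hk => hmem k hk.1, min_self]
  have gk_spec : ∀ k, IntervalIntegrable (gk k) volume 0 1 ∧
      (∫ u in (0:ℝ)..1, gk k u) = (b k - a k)^2 * ∫ t in (0:ℝ)..1, (Bk k t t - t) := by
    intro k
    rcases eq_or_lt_of_le (hab k).2.1 with heq | hlt
    · have hg0 : gk k = fun _ => (0:ℝ) := by
        funext u
        apply gzero
        rw [← heq, Set.Ioo_self]
        exact Set.notMem_empty u
      rw [hg0]
      constructor
      · exact intervalIntegrable_const
      · rw [← heq]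
        simp
    · have hne0 : b k - a k ≠ 0 := ne_of_gt (by linarith)
      have ha0 : 0 ≤ a k := (hab k).1
      have hb1 : b k ≤ 1 := (hab k).2.2
      have ek1 : EqOn (gk k) (fun _ => (0:ℝ)) (uIcc 0 (a k)) := by
        rw [uIcc_of_le ha0]
        intro u hu
        apply gzero
        intro hio
        exact absurd hu.2 (not_le.mpr hio.1)
      have ek3 : EqOn (gk k) (fun _ => (0:ℝ)) (uIcc (b k) 1) := by
        rw [uIcc_of_le hb1]
        intro u hu
        apply gzero
        intro hio
        exact absurd hu.1 (not_le.mpr hio.2)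
      have ek2 : EqOn (gk k) (fun u => (fun t => (b k - a k) * (Bk k t t - t))
          ((u - a k)/(b k - a k))) (uIcc (a k) (b k)) := by
        rw [uIcc_of_le (hab k).2.1]
        intro u hu
        simp only [hgk, if_pos hu]
      have hcont : ContinuousOn (fun t : ℝ => (b k - a k) * (Bk k t t - t)) (Icc 0 1) :=
        continuousOn_const.mul
          (((hBk k).continuousOn_comp continuous_id continuous_id
            (fun x hx => hx) (fun x hx => hx)).sub continuousOn_id)
      have hmaps : ∀ u ∈ uIcc (a k) (b k), (u - a k)/(b k - a k) ∈ Icc (0:ℝ) 1 := by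
        rw [uIcc_of_le (hab k).2.1]
        intro u hu
        constructor
        · apply div_nonneg (by linarith [hu.1]) (by linarith)
        · rw [div_le_one (by linarith : (0:ℝ) < b k - a k)]
          linarith [hu.2]
      have c2 : ContinuousOn (fun u => (fun t => (b k - a k) * (Bk k t t - t))
          ((u - a k)/(b k - a k))) (uIcc (a k) (b k)) :=
        hcont.comp ((continuous_id.sub continuous_const).div_const _).continuousOn hmaps
      have i1 : IntervalIntegrable (gk k) volume 0 (a k) :=
        (continuousOn_const.congr ek1).intervalIntegrable
      have i2 : IntervalIntegrable (gk k) volume (a k) (b k) :=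
        (c2.congr ek2).intervalIntegrable
      have i3 : IntervalIntegrable (gk k) volume (b k) 1 :=
        (continuousOn_const.congr ek3).intervalIntegrable
      refine ⟨(i1.trans i2).trans i3, ?_⟩
      rw [← intervalIntegral.integral_add_adjacent_intervals (i1.trans i2) i3,
        ← intervalIntegral.integral_add_adjacent_intervals i1 i2,
        intervalIntegral.integral_congr ek1, intervalIntegral.integral_congr ek3,
        intervalIntegral.integral_congr ek2]
      have hsubst := integral_comp_affine
        (F := fun t => (b k - a k) * (Bk k t t - t)) hne0 (a k) (a k) (b k)
      rw [hsubst, sub_self, zero_div, div_self hne0]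
      have hintk : IntervalIntegrable (fun t => Bk k t t - t) volume 0 1 := by
        apply ContinuousOn.intervalIntegrable
        rw [uIcc_of_le zero_le_one]
        exact (((hBk k).continuousOn_comp continuous_id continuous_id
          (fun x hx => hx) (fun x hx => hx)).sub continuousOn_id)
      rw [intervalIntegral.integral_const_mul]
      simp only [intervalIntegral.integral_const, smul_eq_mul]
      ring
  have hgsum : IntervalIntegrable (fun u => ∑ k, gk k u) volume 0 1 := by
    have h1 := IntervalIntegrable.sum (μ := volume) (a := 0) (b := 1) Finset.univ
      (fun k _ => (gk_spec k).1)
    have heq : (fun u => ∑ k, gk k u) = ∑ i : Fin n, gk i := by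
      funext u
      simp [Finset.sum_apply]
    rw [heq]
    exact h1
  have hDint : (∫ u in (0:ℝ)..1, B u u) =
      1/2 + ∑ k, (b k - a k)^2 * ∫ t in (0:ℝ)..1, (Bk k t t - t) := by
    have hcongr : (∫ u in (0:ℝ)..1, B u u) = ∫ u in (0:ℝ)..1, (u + ∑ k, gk k u) :=
      intervalIntegral.integral_congr fun u hu =>
        key1 u (by rwa [uIcc_of_le zero_le_one] at hu)
    have hadd : (∫ u in (0:ℝ)..1, (u + ∑ k, gk k u)) =
        (∫ u in (0:ℝ)..1, u) + ∫ u in (0:ℝ)..1, ∑ k, gk k u :=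
      intervalIntegral.integral_add (continuous_id'.intervalIntegrable _ _) hgsum
    have hfs : (∫ u in (0:ℝ)..1, ∑ k, gk k u) = ∑ k, ∫ u in (0:ℝ)..1, gk k u :=
      intervalIntegral.integral_finset_sum (fun k _ => (gk_spec k).1)
    rw [hcongr, hadd, integral_id, hfs]
    have hsc : (∑ k, ∫ u in (0:ℝ)..1, gk k u) =
        ∑ k, (b k - a k)^2 * ∫ t in (0:ℝ)..1, (Bk k t t - t) :=
      Finset.sum_congr rfl fun k _ => (gk_spec k).2
    rw [hsc]
    norm_num
  have hphi : ∀ k, (∫ t in (0:ℝ)..1, (Bk k t t - t)) = (footrule (Bk k) - 1)/6 := by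
    intro k
    have hint : IntervalIntegrable (fun t => Bk k t t) volume 0 1 := by
      apply ContinuousOn.intervalIntegrable
      rw [uIcc_of_le zero_le_one]
      exact (hBk k).continuousOn_comp continuous_id continuous_id
        (fun x hx => hx) (fun x hx => hx)
    have hsub : (∫ t in (0:ℝ)..1, (Bk k t t - t)) =
        (∫ t in (0:ℝ)..1, Bk k t t) - ∫ t in (0:ℝ)..1, t :=
      intervalIntegral.integral_sub hint (continuous_id'.intervalIntegrable _ _)
    rw [hsub, integral_id]
    unfold footrule
    ring
  -- main formula
  have main : giniGamma B = 4 * (b j - a j) ^ 2 * (max 0 c) ^ 2 + 4 * a j - 4 * (a j) ^ 2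
      - (2/3) * ∑ k, (b k - a k) ^ 2 * (1 - footrule (Bk k))
      + 4 * (b j - a j) ^ 2 * ∫ t in (max 0 c)..(1 + min 0 c), Bk j t (1 + c - t) := by
    unfold giniGamma
    rw [hDint, hAint]
    have hs1 : (∑ k, (b k - a k)^2 * ∫ t in (0:ℝ)..1, (Bk k t t - t)) =
        ∑ k, (b k - a k)^2 * ((footrule (Bk k) - 1)/6) :=
      Finset.sum_congr rfl fun k _ => by rw [hphi k]
    have hs2 : (∑ k, (b k - a k)^2 * ((footrule (Bk k) - 1)/6)) =
        -(1/6) * ∑ k, (b k - a k)^2 * (1 - footrule (Bk k)) := by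
      rw [Finset.mul_sum]
      exact Finset.sum_congr rfl fun k _ => by ring
    rw [hs1, hs2, hL]
    linear_combination (4*(a j)*(b j - a j)) * hMm + (4*(a j)) * hch
  refine ⟨main, fun hsum1 => ?_⟩
  have hc0 : c = 0 := by rw [hc, show (1:ℝ) - a j - b j = 0 by linarith, zero_div]
  subst hc0
  simp only [max_self, min_self, add_zero] at main
  rw [main, ← Finset.add_sum_erase _ _ (Finset.mem_univ j)]
  unfold giniGamma footrule
  have hb1 : b j = 1 - a j := by linarith
  rw [hb1]
  ring
end

section
/- Let B be the ordinal sum of copulas B_1,…,B_n with respect to pairwise disjoint open subintervals (a_1,b_1),…,(a_n,b_n) of [0,1]. If 1/2 does not belong to any of the intervals (a_k,b_k), then Blomqvist's beta satisfies β(B) = 1. If 1/2 ∈ (a_j, b_j) for some j ∈ {1,…,n}, then β(B) = 4a_j + 4(b_j − a_j)·B_j((1/2 − a_j)/(b_j − a_j), (1/2 − a_j)/(b_j − a_j)) − 1; in particular, if a_j + b_j = 1 then β(B) = 1 − (b_j − a_j)·(1 − β(B_j)). -/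
open MeasureTheory Set

/-- Blomqvist's beta of an ordinal sum. -/
theorem blomqvistBeta_ordinalSum {n : ℕ} (a b : Fin n → ℝ)
    (Bk : Fin n → ℝ → ℝ → ℝ) (B : ℝ → ℝ → ℝ)
    (hBk : ∀ k, IsCopula (Bk k)) (hB : IsOrdinalSum a b Bk B) :
    ((∀ k, (1:ℝ)/2 ∉ Ioo (a k) (b k)) → blomqvistBeta B = 1) ∧
    (∀ j, (1:ℝ)/2 ∈ Ioo (a j) (b j) →
      blomqvistBeta B = 4 * a j
          + 4 * (b j - a j) * Bk j ((1/2 - a j) / (b j - a j)) ((1/2 - a j) / (b j - a j)) - 1 ∧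
        (a j + b j = 1 →
          blomqvistBeta B = 1 - (b j - a j) * (1 - blomqvistBeta (Bk j)))) := by
  obtain ⟨hab, hdisj, hin, hout⟩ := hB
  have h12 : (1:ℝ)/2 ∈ Icc (0:ℝ) 1 := by norm_num
  constructor
  · intro hno
    unfold blomqvistBeta
    have hBval : B (1/2) (1/2) = 1/2 := by
      by_cases hex : ∃ k, (1:ℝ)/2 ∈ Icc (a k) (b k)
      · obtain ⟨k, hk⟩ := hex
        rw [hin k _ hk _ hk]
        rcases eq_or_lt_of_le (hab k).2.1 with heq | hlt
        · have hak : a k = 1/2 := le_antisymm hk.1 (heq ▸ hk.2)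
          rw [← heq, hak]
          ring
        · have hnio := hno k
          simp only [mem_Ioo, not_and, not_lt] at hnio
          rcases eq_or_lt_of_le hk.1 with hA | hA
          · -- a k = 1/2
            have h0 : ((1:ℝ)/2 - a k) / (b k - a k) = 0 := by
              rw [← hA]; simp
            rw [h0, (hBk k).1 0 (by norm_num), ← hA]
            ring
          · have hb : b k = 1/2 := le_antisymm (hnio hA) hk.2
            have h1 : ((1:ℝ)/2 - a k) / (b k - a k) = 1 := by
              rw [div_eq_one_iff_eq (sub_ne_zero.mpr hlt.ne')]
              linarith
            rw [h1, (hBk k).2.2.1 1 (by norm_num), hb]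
            ring
      · push_neg at hex
        rw [hout _ h12 _ h12 (fun k hk => hex k hk.1)]
        simp
    rw [hBval]; norm_num
  · intro j hj
    have hd : (0:ℝ) < b j - a j := by
      have := hj.1; have := hj.2; linarith [hj.1, hj.2]
    have hIcc : (1:ℝ)/2 ∈ Icc (a j) (b j) := ⟨le_of_lt hj.1, le_of_lt hj.2⟩
    have hval := hin j _ hIcc _ hIcc
    constructor
    · unfold blomqvistBeta
      rw [hval]; ring
    · intro hsum
      have ht : ((1:ℝ)/2 - a j) / (b j - a j) = 1/2 := by
        rw [div_eq_iff (ne_of_gt hd)]; linarith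
      unfold blomqvistBeta
      rw [hval, ht]
      have : 4 * a j = 2 - 2 * (b j - a j) := by linarith
      ring_nf
      nlinarith [hd]
end

section
/- Let B be the ordinal sum of copulas B_1,…,B_n with respect to pairwise disjoint open subintervals (a_1,b_1),…,(a_n,b_n) of [0,1]. Suppose g : [0,1]² → ℝ and g_k : [0,1]² → ℝ (k = 1,…,n) are measurable functions such that, for almost every (u,v) ∈ [0,1]², g(u,v) is the partial derivative of B with respect to its first variable at (u,v) and, for each k, g_k(u,v) is the partial derivative of B_k with respect to its first variable at (u,v). Then Chatterjee's xi of B satisfies ξ(B) = 1 − Σ_{k=1}^n (b_k − a_k)² · (1 − ξ(B_k)), i.e., 6·∫_{[0,1]²} g(u,v)² du dv − 2 = 1 − Σ_{k=1}^n (b_k − a_k)² · (3 − 6·∫_{[0,1]²} g_k(u,v)² du dv). -/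
open MeasureTheory Set

section ChatterjeeAux

lemma copula_incr {C : ℝ → ℝ → ℝ} (hC : IsCopula C) {u₁ u₂ v : ℝ}
    (h0 : 0 ≤ u₁) (h12 : u₁ ≤ u₂) (h2 : u₂ ≤ 1) (hv : v ∈ Icc (0:ℝ) 1) :
    0 ≤ C u₂ v - C u₁ v ∧ C u₂ v - C u₁ v ≤ u₂ - u₁ := by
  obtain ⟨h0v, hu0, hu1, h1v, hrect⟩ := hC
  have h1 := hrect u₁ u₂ 0 v h0 h12 h2 le_rfl hv.1 hv.2
  have h2' := hrect u₁ u₂ v 1 h0 h12 h2 hv.1 hv.2 le_rfl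
  have e1 : C u₂ 0 = 0 := hu0 _ ⟨h0.trans h12, h2⟩
  have e2 : C u₁ 0 = 0 := hu0 _ ⟨h0, h12.trans h2⟩
  have e3 : C u₂ 1 = u₂ := hu1 _ ⟨h0.trans h12, h2⟩
  have e4 : C u₁ 1 = u₁ := hu1 _ ⟨h0, h12.trans h2⟩
  constructor <;> nlinarith

lemma copula_deriv_mem {C : ℝ → ℝ → ℝ} (hC : IsCopula C) {u v d : ℝ}
    (hu : u ∈ Ioo (0:ℝ) 1) (hv : v ∈ Icc (0:ℝ) 1)
    (hd : HasDerivAt (fun s => C s v) d u) : d ∈ Icc (0:ℝ) 1 := by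
  have hs := hasDerivAt_iff_tendsto_slope.mp hd
  have hmono : Filter.Tendsto (slope (fun s => C s v) u) (nhdsWithin u (Ioi u)) (nhds d) :=
    hs.mono_left (nhdsWithin_mono _ (fun x hx => ne_of_gt hx))
  have hev : ∀ᶠ s in nhdsWithin u (Ioi u), slope (fun s => C s v) u s ∈ Icc (0:ℝ) 1 := by
    filter_upwards [Ioo_mem_nhdsGT_of_mem ⟨le_refl u, hu.2⟩] with s hs'
    have hsu : 0 < s - u := by linarith [hs'.1]
    have := copula_incr hC (le_of_lt hu.1) (le_of_lt hs'.1) (le_of_lt hs'.2) hv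
    rw [slope_def_field]
    constructor
    · exact div_nonneg (by simpa using this.1) hsu.le
    · rw [div_le_one hsu]; simpa using this.2
  constructor
  · exact le_of_tendsto_of_tendsto tendsto_const_nhds hmono
      (hev.mono fun s hs => hs.1)
  · exact le_of_tendsto_of_tendsto hmono tendsto_const_nhds
      (hev.mono fun s hs => hs.2)

lemma null_fst {s : Set ℝ} (hs : volume s = 0) : volume {p : ℝ × ℝ | p.1 ∈ s} = 0 := by
  have : {p : ℝ × ℝ | p.1 ∈ s} = s ×ˢ (univ : Set ℝ) := by ext p; simp
  rw [this, Measure.volume_eq_prod, Measure.prod_prod, hs, zero_mul]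

lemma null_snd {s : Set ℝ} (hs : volume s = 0) : volume {p : ℝ × ℝ | p.2 ∈ s} = 0 := by
  have : {p : ℝ × ℝ | p.2 ∈ s} = (univ : Set ℝ) ×ˢ s := by ext p; simp
  rw [this, Measure.volume_eq_prod, Measure.prod_prod, hs, mul_zero]

lemma null_diag : volume {p : ℝ × ℝ | p.1 = p.2} = 0 := by
  rw [Measure.volume_eq_prod]
  rw [Measure.measure_prod_null (measurableSet_eq_fun measurable_fst measurable_snd)]
  filter_upwards with x
  have : (Prod.mk x ⁻¹' {p : ℝ × ℝ | p.1 = p.2}) = {x} := by ext y; simp [eq_comm]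
  simp [this]

lemma sq_ae_eq {α β : ℝ} :
    (Ioo α β ×ˢ Ioo α β : Set (ℝ × ℝ)) =ᵐ[volume] (Icc α β ×ˢ Icc α β : Set (ℝ × ℝ)) := by
  rw [Filter.eventuallyEq_set]
  have hnull : volume ({p : ℝ × ℝ | p.1 ∈ ({α, β} : Set ℝ)} ∪ {p : ℝ × ℝ | p.2 ∈ ({α, β} : Set ℝ)}) = 0 :=
    measure_union_null (null_fst ((toFinite _).measure_zero _)) (null_snd ((toFinite _).measure_zero _))
  filter_upwards [measure_eq_zero_iff_ae_notMem.mp hnull] with p hp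
  simp only [mem_union, mem_setOf_eq, not_or] at hp
  simp only [mem_prod, mem_Ioo, mem_Icc]
  constructor
  · rintro ⟨⟨h1, h2⟩, h3, h4⟩; exact ⟨⟨h1.le, h2.le⟩, h3.le, h4.le⟩
  · rintro ⟨⟨h1, h2⟩, h3, h4⟩
    have e1 : p.1 ≠ α ∧ p.1 ≠ β := by simpa [not_or] using hp.1
    have e2 : p.2 ≠ α ∧ p.2 ≠ β := by simpa [not_or] using hp.2
    exact ⟨⟨h1.lt_of_ne (Ne.symm e1.1), h2.lt_of_ne e1.2⟩,
      h3.lt_of_ne (Ne.symm e2.1), h4.lt_of_ne e2.2⟩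

lemma integral_comp_affine_s7 (G : ℝ × ℝ → ℝ) {h : ℝ} (hh : 0 < h) (c : ℝ × ℝ) :
    ∫ p : ℝ × ℝ, G (h⁻¹ • (p - c)) = h ^ 2 * ∫ p : ℝ × ℝ, G p := by
  rw [integral_sub_right_eq_self (fun q => G (h⁻¹ • q)) c]
  rw [Measure.integral_comp_smul volume G h⁻¹]
  have : Module.finrank ℝ (ℝ × ℝ) = 2 := by simp
  rw [this, smul_eq_mul]
  congr 1
  rw [abs_of_nonneg (by positivity)]
  field_simp

lemma integral_d_eq_half :
    ∫ p in (Icc (0:ℝ) 1 ×ˢ Icc (0:ℝ) 1), ({q : ℝ × ℝ | q.1 < q.2}.indicator (fun _ => (1:ℝ))) p = 1/2 := by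
  have hs : MeasurableSet {q : ℝ × ℝ | q.1 < q.2} :=
    measurableSet_lt measurable_fst measurable_snd
  have hrestr : (volume : Measure (ℝ × ℝ)).restrict (Icc (0:ℝ) 1 ×ˢ Icc (0:ℝ) 1)
      = ((volume : Measure ℝ).restrict (Icc (0:ℝ) 1)).prod ((volume : Measure ℝ).restrict (Icc (0:ℝ) 1)) := by
    rw [Measure.volume_eq_prod, Measure.prod_restrict]
  rw [hrestr]
  have hint : Integrable ({q : ℝ × ℝ | q.1 < q.2}.indicator (fun _ => (1:ℝ)))
      (((volume : Measure ℝ).restrict (Icc (0:ℝ) 1)).prod ((volume : Measure ℝ).restrict (Icc (0:ℝ) 1))) :=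
    (integrable_const (1:ℝ)).indicator hs
  rw [MeasureTheory.integral_prod _ hint]
  have inner : ∀ x ∈ Icc (0:ℝ) 1,
      (∫ y in Icc (0:ℝ) 1, {q : ℝ × ℝ | q.1 < q.2}.indicator (fun _ => (1:ℝ)) (x, y)) = 1 - x := by
    intro x hx
    have : (fun y => {q : ℝ × ℝ | q.1 < q.2}.indicator (fun _ => (1:ℝ)) (x, y))
        = (Ioi x).indicator (fun _ => (1:ℝ)) := by
      ext y; by_cases hxy : x < y <;> simp [indicator, hxy]
    rw [this, integral_indicator_const _ measurableSet_Ioi]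
    rw [measureReal_def, Measure.restrict_apply measurableSet_Ioi]
    have : Ioi x ∩ Icc (0:ℝ) 1 = Ioc x 1 := by
      ext y; simp only [mem_inter_iff, mem_Ioi, mem_Icc, mem_Ioc]
      constructor
      · rintro ⟨h1, _, h3⟩; exact ⟨h1, h3⟩
      · rintro ⟨h1, h2⟩; exact ⟨h1, hx.1.trans h1.le, h2⟩
    rw [this, Real.volume_Ioc, smul_eq_mul, mul_one, ENNReal.toReal_ofReal (by linarith [hx.2])]
  rw [setIntegral_congr_fun measurableSet_Icc inner]
  rw [MeasureTheory.integral_Icc_eq_integral_Ioc, ← intervalIntegral.integral_of_le (by norm_num : (0:ℝ) ≤ 1)]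
  have h1 : IntervalIntegrable (fun _ : ℝ => (1:ℝ)) volume 0 1 := intervalIntegrable_const
  have h2 : IntervalIntegrable (fun x : ℝ => x) volume 0 1 := intervalIntegral.intervalIntegrable_id
  rw [intervalIntegral.integral_sub h1 h2, integral_one, integral_id]
  norm_num

lemma mem01_iff {α β x : ℝ} (hab : α < β) :
    (β - α)⁻¹ * (x - α) ∈ Ioo (0:ℝ) 1 ↔ x ∈ Ioo α β := by
  have hβ : 0 < β - α := sub_pos.2 hab
  have e : (β - α) * ((β - α)⁻¹ * (x - α)) = x - α := by field_simp
  simp only [mem_Ioo]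
  constructor
  · rintro ⟨h1, h2⟩
    exact ⟨by nlinarith [mul_pos hβ h1], by nlinarith [mul_lt_mul_of_pos_left h2 hβ]⟩
  · rintro ⟨h1, h2⟩
    refine ⟨mul_pos (inv_pos.2 hβ) (sub_pos.2 h1), ?_⟩
    rw [inv_mul_eq_div, div_lt_one hβ]; linarith

end ChatterjeeAux
/-- Chatterjee's xi of an ordinal sum:
ξ(B) = 1 − Σ_k (b_k − a_k)² (1 − ξ(B_k)), where the xi's are expressed through
(almost everywhere) first-variable partial derivatives g, g_k. -/
theorem chatterjeeXi_ordinalSum {n : ℕ} (a b : Fin n → ℝ) (Bk : Fin n → ℝ → ℝ → ℝ)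
    (B : ℝ → ℝ → ℝ) (hBk : ∀ k, IsCopula (Bk k)) (hB : IsOrdinalSum a b Bk B)
    (g : ℝ → ℝ → ℝ) (gk : Fin n → ℝ → ℝ → ℝ)
    (hgm : Measurable fun p : ℝ × ℝ => g p.1 p.2)
    (hgkm : ∀ k, Measurable fun p : ℝ × ℝ => gk k p.1 p.2)
    (hg : ∀ᵐ p ∂(volume.restrict (Icc (0:ℝ) 1 ×ˢ Icc (0:ℝ) 1)),
      HasDerivAt (fun s => B s p.2) (g p.1 p.2) p.1)
    (hgk : ∀ k, ∀ᵐ p ∂(volume.restrict (Icc (0:ℝ) 1 ×ˢ Icc (0:ℝ) 1)),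
      HasDerivAt (fun s => Bk k s p.2) (gk k p.1 p.2) p.1) :
    6 * (∫ p in Icc (0:ℝ) 1 ×ˢ Icc (0:ℝ) 1, (g p.1 p.2) ^ 2) - 2 =
      1 - ∑ k, (b k - a k) ^ 2 *
        (3 - 6 * ∫ p in Icc (0:ℝ) 1 ×ˢ Icc (0:ℝ) 1, (gk k p.1 p.2) ^ 2) := by  classical
  obtain ⟨hab, hdisj, hsq, hmin⟩ := hB
  set Q : Set (ℝ × ℝ) := Icc (0:ℝ) 1 ×ˢ Icc (0:ℝ) 1 with hQdef
  have hQm : MeasurableSet Q := measurableSet_Icc.prod measurableSet_Icc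
  haveI hQfin : IsFiniteMeasure ((volume : Measure (ℝ × ℝ)).restrict Q) :=
    ⟨by rw [Measure.restrict_apply_univ]
        exact (isCompact_Icc.prod isCompact_Icc).measure_lt_top⟩
  set d : ℝ × ℝ → ℝ := {q : ℝ × ℝ | q.1 < q.2}.indicator (fun _ => (1:ℝ)) with hddef
  have hdmeas : Measurable d :=
    measurable_const.indicator (measurableSet_lt measurable_fst measurable_snd)
  have hd_int : Integrable d ((volume : Measure (ℝ × ℝ)).restrict Q) :=
    (integrable_const (1:ℝ)).indicator (measurableSet_lt measurable_fst measurable_snd)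
  set T : Fin n → ℝ × ℝ → ℝ × ℝ := fun k p => (b k - a k)⁻¹ • (p - (a k, a k)) with hTdef
  have hTcoord : ∀ k p, T k p = ((b k - a k)⁻¹ * (p.1 - a k), (b k - a k)⁻¹ * (p.2 - a k)) :=
    fun k p => rfl
  have hTmeas : ∀ k, Measurable (T k) := by
    intro k
    have : T k = fun p : ℝ × ℝ => ((b k - a k)⁻¹ * (p.1 - a k), (b k - a k)⁻¹ * (p.2 - a k)) :=
      funext fun p => rfl
    rw [this]
    exact ((measurable_fst.sub measurable_const).const_mul _).prodMk
      ((measurable_snd.sub measurable_const).const_mul _)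
  set F : Fin n → ℝ × ℝ → ℝ := fun k =>
    (Ioo (a k) (b k) ×ˢ Ioo (a k) (b k)).indicator
      (fun p => (gk k (T k p).1 (T k p).2) ^ 2 - d p) with hFdef
  have hIooSqm : ∀ k, MeasurableSet (Ioo (a k) (b k) ×ˢ Ioo (a k) (b k) : Set (ℝ × ℝ)) :=
    fun k => measurableSet_Ioo.prod measurableSet_Ioo
  have hFmeas : ∀ k, Measurable (F k) := by
    intro k
    apply Measurable.indicator _ (hIooSqm k)
    exact (((hgkm k).comp (hTmeas k)).pow_const 2).sub hdmeas
  -- a.e. facts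
  have hIoo1 : ∀ᵐ p ∂((volume : Measure (ℝ × ℝ)).restrict Q), p.1 ∈ Ioo (0:ℝ) 1 := by
    have h0 : ∀ᵐ p ∂(volume : Measure (ℝ × ℝ)), p.1 ∉ ({0, 1} : Set ℝ) :=
      measure_eq_zero_iff_ae_notMem.mp (null_fst ((Set.Finite.insert (0:ℝ) (Set.finite_singleton 1)).measure_zero _))
    filter_upwards [ae_restrict_of_ae h0, ae_restrict_mem hQm] with p hp hpQ
    have h1 : p.1 ∈ Icc (0:ℝ) 1 := hpQ.1
    simp only [mem_insert_iff, mem_singleton_iff, not_or] at hp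
    exact ⟨h1.1.lt_of_ne (Ne.symm hp.1), h1.2.lt_of_ne hp.2⟩
  have hgkb : ∀ k, ∀ᵐ p ∂((volume : Measure (ℝ × ℝ)).restrict Q),
      gk k p.1 p.2 ∈ Icc (0:ℝ) 1 := by
    intro k
    filter_upwards [hgk k, hIoo1, ae_restrict_mem hQm] with p hder hIoo hpQ
    exact copula_deriv_mem (hBk k) hIoo hpQ.2 hder
  have hgk2_int : ∀ k, Integrable (fun p : ℝ × ℝ => (gk k p.1 p.2) ^ 2)
      ((volume : Measure (ℝ × ℝ)).restrict Q) := by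
    intro k
    refine Integrable.mono' (integrable_const (1:ℝ))
      (((hgkm k).pow_const 2).aestronglyMeasurable) ?_
    filter_upwards [hgkb k] with p hp
    rw [Real.norm_eq_abs, abs_of_nonneg (by positivity)]
    nlinarith [hp.1, hp.2]
  -- pulled-back derivative statements
  have hA : ∀ k, ∀ᵐ p ∂(volume : Measure (ℝ × ℝ)),
      p ∈ (Ioo (a k) (b k) ×ˢ Ioo (a k) (b k) : Set (ℝ × ℝ)) →
      (HasDerivAt (fun s => Bk k s (T k p).2) (gk k (T k p).1 (T k p).2) (T k p).1 ∧
        gk k (T k p).1 (T k p).2 ∈ Icc (0:ℝ) 1) := by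
    intro k
    by_cases hk : a k < b k
    · have hbase : ∀ᵐ q ∂((volume : Measure (ℝ × ℝ)).restrict Q),
          (HasDerivAt (fun s => Bk k s q.2) (gk k q.1 q.2) q.1 ∧ gk k q.1 q.2 ∈ Icc (0:ℝ) 1) :=
        (hgk k).and (hgkb k)
      have hbase' := (ae_restrict_iff' hQm).mp hbase
      have hqmp : Measure.QuasiMeasurePreserving (T k) (volume : Measure (ℝ × ℝ)) volume :=
        (Measure.quasiMeasurePreserving_smul volume (inv_ne_zero (sub_pos.2 hk).ne')).comp
          (measurePreserving_sub_right volume _).quasiMeasurePreserving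
      filter_upwards [hqmp.ae hbase'] with p hp hpmem
      apply hp
      rw [hQdef, hTcoord]
      have h1 := (mem01_iff hk).2 hpmem.1
      have h2 := (mem01_iff hk).2 hpmem.2
      exact ⟨⟨h1.1.le, h1.2.le⟩, h2.1.le, h2.2.le⟩
    · have : Ioo (a k) (b k) = ∅ := Ioo_eq_empty hk
      filter_upwards with p hp
      rw [this] at hp
      simp at hp
  -- integrability of F k
  have hF_int : ∀ k, Integrable (F k) ((volume : Measure (ℝ × ℝ)).restrict Q) := by
    intro k
    refine Integrable.mono' (integrable_const (1:ℝ)) (hFmeas k).aestronglyMeasurable ?_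
    filter_upwards [ae_restrict_of_ae (hA k)] with p hp
    simp only [hFdef]
    by_cases hmem : p ∈ (Ioo (a k) (b k) ×ˢ Ioo (a k) (b k) : Set (ℝ × ℝ))
    · rw [indicator_of_mem hmem]
      have hb := (hp hmem).2
      have hd01 : d p = 0 ∨ d p = 1 := by
        simp only [hddef]; by_cases h : p ∈ {q : ℝ × ℝ | q.1 < q.2}
        · right; rw [indicator_of_mem h]
        · left; rw [indicator_of_notMem h]
      rw [Real.norm_eq_abs, abs_le]
      rcases hd01 with h | h <;> rw [h] <;> constructor <;> nlinarith [hb.1, hb.2]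
    · rw [indicator_of_notMem hmem]; norm_num
  have hkey : ∀ᵐ p ∂((volume : Measure (ℝ × ℝ)).restrict Q),
      (g p.1 p.2) ^ 2 = (∑ k, F k p) + d p := by
    have hend : ∀ᵐ p ∂((volume : Measure (ℝ × ℝ)).restrict Q), ∀ k : Fin n,
        p.1 ∉ ({a k, b k} : Set ℝ) ∧ p.2 ∉ ({a k, b k} : Set ℝ) := by
      rw [ae_all_iff]
      intro k
      have h1 := measure_eq_zero_iff_ae_notMem.mp
        (null_fst ((Set.Finite.insert (a k) (Set.finite_singleton (b k))).measure_zero volume))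
      have h2 := measure_eq_zero_iff_ae_notMem.mp
        (null_snd ((Set.Finite.insert (a k) (Set.finite_singleton (b k))).measure_zero volume))
      exact (ae_restrict_of_ae h1).and (ae_restrict_of_ae h2)
    have hne : ∀ᵐ p ∂((volume : Measure (ℝ × ℝ)).restrict Q), p.1 ≠ p.2 :=
      ae_restrict_of_ae (measure_eq_zero_iff_ae_notMem.mp null_diag)
    have hAall : ∀ᵐ p ∂((volume : Measure (ℝ × ℝ)).restrict Q), ∀ k : Fin n,
        p ∈ (Ioo (a k) (b k) ×ˢ Ioo (a k) (b k) : Set (ℝ × ℝ)) →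
        (HasDerivAt (fun s => Bk k s (T k p).2) (gk k (T k p).1 (T k p).2) (T k p).1 ∧
          gk k (T k p).1 (T k p).2 ∈ Icc (0:ℝ) 1) :=
      ae_all_iff.2 fun k => ae_restrict_of_ae (hA k)
    filter_upwards [hg, ae_restrict_mem hQm, hIoo1, hne, hend, hAall]
      with p hgp hpQ hp1 hpne hpend hpA
    by_cases hcase : ∃ k, p ∈ (Ioo (a k) (b k) ×ˢ Ioo (a k) (b k) : Set (ℝ × ℝ))
    · obtain ⟨k, hk⟩ := hcase
      have hklt : a k < b k := hk.1.1.trans hk.1.2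
      have hpos : (0:ℝ) < b k - a k := sub_pos.2 hklt
      obtain ⟨hder, hbnd⟩ := hpA k hk
      have hi : HasDerivAt (fun s : ℝ => (b k - a k)⁻¹ * (s - a k)) ((b k - a k)⁻¹) p.1 := by
        simpa using ((hasDerivAt_id p.1).sub_const (a k)).const_mul ((b k - a k)⁻¹)
      have hcomp : HasDerivAt (fun s => Bk k ((b k - a k)⁻¹ * (s - a k)) (T k p).2)
          (gk k (T k p).1 (T k p).2 * (b k - a k)⁻¹) p.1 :=
        HasDerivAt.comp (h₂ := fun s => Bk k s (T k p).2) p.1 hder hi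
      have hφ : HasDerivAt
          (fun s => a k + (b k - a k) * Bk k ((b k - a k)⁻¹ * (s - a k)) (T k p).2)
          ((b k - a k) * (gk k (T k p).1 (T k p).2 * (b k - a k)⁻¹)) p.1 :=
        (hcomp.const_mul (b k - a k)).const_add (a k)
      have hval : (b k - a k) * (gk k (T k p).1 (T k p).2 * (b k - a k)⁻¹)
          = gk k (T k p).1 (T k p).2 := by field_simp
      rw [hval] at hφ
      have hev : (fun s => B s p.2) =ᶠ[nhds p.1]
          (fun s => a k + (b k - a k) * Bk k ((b k - a k)⁻¹ * (s - a k)) (T k p).2) := by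
        filter_upwards [Ioo_mem_nhds hk.1.1 hk.1.2] with s hs
        rw [hsq k s (Ioo_subset_Icc_self hs) p.2 (Ioo_subset_Icc_self hk.2)]
        rw [div_eq_inv_mul, div_eq_inv_mul]
        rfl
      have hder2 : HasDerivAt (fun s => B s p.2) (gk k (T k p).1 (T k p).2) p.1 :=
        hφ.congr_of_eventuallyEq hev
      have hgval : g p.1 p.2 = gk k (T k p).1 (T k p).2 := hgp.unique hder2
      have hsum : (∑ k', F k' p) = gk k (T k p).1 (T k p).2 ^ 2 - d p := by
        rw [Finset.sum_eq_single k]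
        · simp only [hFdef]; rw [indicator_of_mem hk]
        · intro k' _ hkk'
          simp only [hFdef]
          apply indicator_of_notMem
          intro hk'
          exact Set.disjoint_left.mp (hdisj hkk') hk'.1 hk.1
        · intro h; exact absurd (Finset.mem_univ k) h
      rw [hgval, hsum]; ring
    · push_neg at hcase
      have hnotsq : ∀ k, ¬(p.1 ∈ Icc (a k) (b k) ∧ p.2 ∈ Icc (a k) (b k)) := by
        rintro k ⟨h1, h2⟩
        have e1 : p.1 ≠ a k ∧ p.1 ≠ b k := by simpa [not_or] using (hpend k).1
        have e2 : p.2 ≠ a k ∧ p.2 ≠ b k := by simpa [not_or] using (hpend k).2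
        exact hcase k ⟨⟨h1.1.lt_of_ne (Ne.symm e1.1), h1.2.lt_of_ne e1.2⟩,
          ⟨h2.1.lt_of_ne (Ne.symm e2.1), h2.2.lt_of_ne e2.2⟩⟩
      set V : Fin n → Set ℝ := fun k =>
        if p.2 ∈ Icc (a k) (b k) then (Icc (a k) (b k))ᶜ else univ with hVdef
      have hVopen : ∀ k, IsOpen (V k) := by
        intro k; simp only [hVdef]
        split
        · exact isClosed_Icc.isOpen_compl
        · exact isOpen_univ
      have hVmem : p.1 ∈ ⋂ k, V k := by
        refine mem_iInter.2 fun k => ?_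
        simp only [hVdef]
        split
        · next hmem2 => exact fun hc => hnotsq k ⟨hc, hmem2⟩
        · trivial
      have hVprop : ∀ k, ∀ s ∈ V k, ¬(s ∈ Icc (a k) (b k) ∧ p.2 ∈ Icc (a k) (b k)) := by
        rintro k s hs ⟨hc1, hc2⟩
        simp only [hVdef] at hs
        rw [if_pos hc2] at hs
        exact hs hc1
      have hU : (Ioo (0:ℝ) 1 ∩ ⋂ k, V k) ∈ nhds p.1 :=
        (isOpen_Ioo.inter (isOpen_iInter_of_finite hVopen)).mem_nhds ⟨hp1, hVmem⟩
      have hBmin : ∀ s ∈ Ioo (0:ℝ) 1 ∩ ⋂ k, V k, B s p.2 = min s p.2 := fun s hs =>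
        hmin s (Ioo_subset_Icc_self hs.1) p.2 hpQ.2
          (fun k => hVprop k s (mem_iInter.1 hs.2 k))
      have hsum0 : (∑ k', F k' p) = 0 := Finset.sum_eq_zero fun k' _ => by
        simp only [hFdef]; exact indicator_of_notMem (hcase k') _
      rcases lt_or_gt_of_ne hpne with hlt | hgt
      · have hev : (fun s => B s p.2) =ᶠ[nhds p.1] (fun s => s) := by
          filter_upwards [Filter.inter_mem hU (Iio_mem_nhds hlt)] with s hs
          rw [hBmin s hs.1, min_eq_left (le_of_lt hs.2)]
        have hder1 : HasDerivAt (fun s => B s p.2) 1 p.1 :=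
          (hasDerivAt_id' p.1).congr_of_eventuallyEq hev
        have hgv : g p.1 p.2 = 1 := hgp.unique hder1
        have hd1 : d p = 1 := by
          simp only [hddef]
          exact indicator_of_mem (show p ∈ {q : ℝ × ℝ | q.1 < q.2} from hlt) _
        rw [hgv, hsum0, hd1]; ring
      · have hev : (fun s => B s p.2) =ᶠ[nhds p.1] (fun _ => p.2) := by
          filter_upwards [Filter.inter_mem hU (Ioi_mem_nhds hgt)] with s hs
          rw [hBmin s hs.1, min_eq_right (le_of_lt hs.2)]
        have hder0 : HasDerivAt (fun s => B s p.2) 0 p.1 :=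
          (hasDerivAt_const p.1 p.2).congr_of_eventuallyEq hev
        have hgv : g p.1 p.2 = 0 := hgp.unique hder0
        have hd0 : d p = 0 := by
          simp only [hddef]
          exact indicator_of_notMem
            (show p ∉ {q : ℝ × ℝ | q.1 < q.2} from not_lt.2 hgt.le) _
        rw [hgv, hsum0, hd0]; ring
  have hFval : ∀ k, (∫ p in Q, F k p) =
      (b k - a k) ^ 2 * ((∫ p in Q, (gk k p.1 p.2) ^ 2) - 1/2) := by
    intro k
    by_cases hk : a k < b k
    · have hpos : (0:ℝ) < b k - a k := sub_pos.2 hk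
      set G : ℝ × ℝ → ℝ := (Ioo (0:ℝ) 1 ×ˢ Ioo (0:ℝ) 1).indicator
        (fun q => (gk k q.1 q.2) ^ 2 - d q) with hGdef
      have hsub : (Ioo (a k) (b k) ×ˢ Ioo (a k) (b k) : Set (ℝ × ℝ)) ⊆ Q := by
        rw [hQdef]
        have h1 : Ioo (a k) (b k) ⊆ Icc (0:ℝ) 1 := fun x hx =>
          ⟨(hab k).1.trans hx.1.le, hx.2.le.trans (hab k).2.2⟩
        exact prod_mono h1 h1
      have hstep1 : (∫ p in Q, F k p) = ∫ p : ℝ × ℝ, F k p := by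
        rw [← integral_indicator hQm]
        congr 1
        refine Set.indicator_eq_self.2 ?_
        refine subset_trans ?_ hsub
        simp only [hFdef]
        exact Set.support_indicator_subset
      have hstep2 : (fun p : ℝ × ℝ => F k p) = fun p => G (T k p) := by
        funext p
        by_cases hmem : p ∈ (Ioo (a k) (b k) ×ˢ Ioo (a k) (b k) : Set (ℝ × ℝ))
        · have hT1 : (T k p).1 ∈ Ioo (0:ℝ) 1 := (mem01_iff hk).2 hmem.1
          have hT2 : (T k p).2 ∈ Ioo (0:ℝ) 1 := (mem01_iff hk).2 hmem.2
          have hdT : d p = d (T k p) := by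
            have hiff : p.1 < p.2 ↔ (T k p).1 < (T k p).2 := by
              show p.1 < p.2 ↔ (b k - a k)⁻¹ * (p.1 - a k) < (b k - a k)⁻¹ * (p.2 - a k)
              rw [mul_lt_mul_iff_right₀ (inv_pos.2 hpos), sub_lt_sub_iff_right]
            simp only [hddef, indicator]
            by_cases hlt : p.1 < p.2
            · rw [if_pos (show p ∈ {q : ℝ × ℝ | q.1 < q.2} from hlt),
                if_pos (show T k p ∈ {q : ℝ × ℝ | q.1 < q.2} from hiff.1 hlt)]
            · rw [if_neg (show p ∉ {q : ℝ × ℝ | q.1 < q.2} from hlt),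
                if_neg (show T k p ∉ {q : ℝ × ℝ | q.1 < q.2} from fun hc => hlt (hiff.2 hc))]
          simp only [hFdef, hGdef]
          rw [indicator_of_mem hmem, indicator_of_mem (mem_prod.2 ⟨hT1, hT2⟩), hdT]
        · have hTnot : T k p ∉ (Ioo (0:ℝ) 1 ×ˢ Ioo (0:ℝ) 1 : Set (ℝ × ℝ)) := by
            intro hc
            exact hmem ⟨(mem01_iff hk).1 hc.1, (mem01_iff hk).1 hc.2⟩
          simp only [hFdef, hGdef]
          rw [indicator_of_notMem hmem, indicator_of_notMem hTnot]
      have hstep3 : (∫ p : ℝ × ℝ, G (T k p)) = (b k - a k) ^ 2 * ∫ p : ℝ × ℝ, G p :=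
        integral_comp_affine_s7 G hpos (a k, a k)
      have hstep4 : (∫ p : ℝ × ℝ, G p) = (∫ p in Q, (gk k p.1 p.2) ^ 2) - 1/2 := by
        simp only [hGdef]
        rw [integral_indicator (measurableSet_Ioo.prod measurableSet_Ioo)]
        rw [Measure.restrict_congr_set sq_ae_eq, ← hQdef]
        rw [integral_sub (hgk2_int k) hd_int]
        congr 1
        simp only [hddef, hQdef]
        exact integral_d_eq_half
      rw [hstep1, hstep2, hstep3, hstep4]
    · have hba : b k - a k = 0 := by
        have := (hab k).2.1
        have := not_lt.mp hk
        linarith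
      have hempty : Ioo (a k) (b k) = ∅ := Ioo_eq_empty hk
      have : ∀ p : ℝ × ℝ, F k p = 0 := by
        intro p
        simp only [hFdef, hempty]
        simp
      simp only [this, hba]
      simp
  -- assemble
  have hsum_int : Integrable (fun p => ∑ k, F k p) ((volume : Measure (ℝ × ℝ)).restrict Q) :=
    integrable_finset_sum _ (fun k _ => hF_int k)
  have hmain : (∫ p in Q, (g p.1 p.2) ^ 2) =
      (∑ k, (b k - a k) ^ 2 * ((∫ p in Q, (gk k p.1 p.2) ^ 2) - 1/2)) + 1/2 := by
    rw [integral_congr_ae hkey, integral_add hsum_int hd_int,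
      integral_finset_sum _ (fun k _ => hF_int k)]
    simp only [hddef, hQdef]
    rw [integral_d_eq_half]
    congr 1
    exact Finset.sum_congr rfl fun k _ => hFval k
  rw [hmain]
  have e : ∀ k : Fin n, (b k - a k) ^ 2 * (3 - 6 * ∫ p in Q, (gk k p.1 p.2) ^ 2) =
      (-6) * ((b k - a k) ^ 2 * ((∫ p in Q, (gk k p.1 p.2) ^ 2) - 1/2)) := fun k => by ring
  rw [Finset.sum_congr rfl fun k _ => e k, ← Finset.mul_sum]
  ring
end

section
/- Let a ∈ [0, 1/2], let C be a copula, and let B_{a,C} be the ordinal sum of the single copula {C} with respect to the single interval {(a, 1−a)}. Then ρ(B_{a,C}) = (1−2a)³·ρ(C) + 8a³ − 12a² + 6a, φ(B_{a,C}) = (1−2a)²·φ(C) + 4a − 4a², γ(B_{a,C}) = (1−2a)²·γ(C) + 4a − 4a², and β(B_{a,C}) = (1−2a)·β(C) + 2a. -/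
open MeasureTheory Set

section Helpers
open intervalIntegral in
lemma II_of_eqOn {f g : ℝ → ℝ} {p q : ℝ} (h : Set.EqOn g f (Set.uIcc p q))
    (hg : IntervalIntegrable g volume p q) : IntervalIntegrable f volume p q := by
  rw [intervalIntegrable_iff] at hg ⊢
  exact hg.congr_fun (fun x hx => h (uIoc_subset_uIcc hx)) measurableSet_uIoc

open intervalIntegral in
lemma int_affine (p q c d : ℝ) : ∫ x in p..q, (c + d * x) = c*(q-p) + d*((q^2-p^2)/2) := by
  rw [intervalIntegral.integral_add intervalIntegrable_const (intervalIntegrable_id.const_mul d),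
    intervalIntegral.integral_const, intervalIntegral.integral_const_mul, integral_id]
  simp only [smul_eq_mul]
  ring

open intervalIntegral in
lemma int_quad (p q : ℝ) : ∫ x in p..q, (x - x^2/2) = (q^2-p^2)/2 - (q^3-p^3)/6 := by
  rw [intervalIntegral.integral_sub intervalIntegrable_id ((intervalIntegrable_pow 2).div_const 2),
    integral_id, intervalIntegral.integral_div, integral_pow]
  norm_num
  try ring

open intervalIntegral in
lemma int_one_sub (p q : ℝ) : ∫ x in p..q, (1 - x) = (q - p) - (q^2-p^2)/2 := by
  rw [intervalIntegral.integral_sub intervalIntegrable_const intervalIntegrable_id,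
    integral_id, intervalIntegral.integral_const]
  simp only [smul_eq_mul, mul_one]

lemma sub_aff (f : ℝ → ℝ) (p s : ℝ) :
    (∫ u in p..(p+s), f ((u - p)/s)) = s * ∫ x in (0:ℝ)..1, f x := by
  rcases eq_or_ne s 0 with rfl | hs
  · simp
  · rw [show ∫ u in p..(p+s), f ((u - p)/s) = ∫ u in p..(p+s), (fun y => f (y/s)) (u - p) from rfl,
      intervalIntegral.integral_comp_sub_right (fun y => f (y/s)) p,
      show p - p = 0 by ring, show p + s - p = s by ring,
      intervalIntegral.integral_comp_div _ hs]
    rw [zero_div, div_self hs, smul_eq_mul]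

/-- split an integral over `[0,1]` into three pieces on which `f` has given forms -/
lemma split3 {f g1 g2 g3 : ℝ → ℝ} {a b : ℝ} (h1 : 0 ≤ a) (h2 : a ≤ b) (h3 : b ≤ 1)
    (e1 : EqOn f g1 (Icc 0 a)) (e2 : EqOn f g2 (Icc a b)) (e3 : EqOn f g3 (Icc b 1))
    (i1 : IntervalIntegrable g1 volume 0 a) (i2 : IntervalIntegrable g2 volume a b)
    (i3 : IntervalIntegrable g3 volume b 1) :
    ∫ x in (0:ℝ)..1, f x =
      (∫ x in (0:ℝ)..a, g1 x) + (∫ x in a..b, g2 x) + ∫ x in b..1, g3 x := by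
  have u1 : uIcc (0:ℝ) a = Icc 0 a := uIcc_of_le h1
  have u2 : uIcc a b = Icc a b := uIcc_of_le h2
  have u3 : uIcc b (1:ℝ) = Icc b 1 := uIcc_of_le h3
  have f1 : IntervalIntegrable f volume 0 a :=
    II_of_eqOn (by rw [u1]; exact e1.symm) i1
  have f2 : IntervalIntegrable f volume a b :=
    II_of_eqOn (by rw [u2]; exact e2.symm) i2
  have f3 : IntervalIntegrable f volume b 1 :=
    II_of_eqOn (by rw [u3]; exact e3.symm) i3
  rw [← intervalIntegral.integral_add_adjacent_intervals f1 (f2.trans f3),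
    ← intervalIntegral.integral_add_adjacent_intervals f2 f3,
    intervalIntegral.integral_congr (show EqOn f g1 (uIcc 0 a) by rw [u1]; exact e1),
    intervalIntegral.integral_congr (show EqOn f g2 (uIcc a b) by rw [u2]; exact e2),
    intervalIntegral.integral_congr (show EqOn f g3 (uIcc b 1) by rw [u3]; exact e3)]
  ring

variable {C : ℝ → ℝ → ℝ}

lemma cop_mono1 (hC : IsCopula C) {u₁ u₂ v : ℝ} (h1 : 0 ≤ u₁) (h2 : u₁ ≤ u₂) (h3 : u₂ ≤ 1)
    (hv1 : 0 ≤ v) (hv2 : v ≤ 1) : C u₁ v ≤ C u₂ v ∧ C u₂ v - C u₁ v ≤ u₂ - u₁ := by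
  obtain ⟨h0v, hu0, hu1, h1v, hrect⟩ := hC
  have A := hrect u₁ u₂ 0 v h1 h2 h3 le_rfl hv1 hv2
  have B := hrect u₁ u₂ v 1 h1 h2 h3 hv1 hv2 le_rfl
  rw [hu0 u₁ ⟨h1, le_trans h2 h3⟩, hu0 u₂ ⟨le_trans h1 h2, h3⟩] at A
  rw [hu1 u₁ ⟨h1, le_trans h2 h3⟩, hu1 u₂ ⟨le_trans h1 h2, h3⟩] at B
  constructor <;> linarith

lemma cop_mono2 (hC : IsCopula C) {u v₁ v₂ : ℝ} (h1 : 0 ≤ v₁) (h2 : v₁ ≤ v₂) (h3 : v₂ ≤ 1)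
    (hu1 : 0 ≤ u) (hu2 : u ≤ 1) : C u v₁ ≤ C u v₂ ∧ C u v₂ - C u v₁ ≤ v₂ - v₁ := by
  obtain ⟨h0v, hu0, hu1', h1v, hrect⟩ := hC
  have A := hrect 0 u v₁ v₂ le_rfl hu1 hu2 h1 h2 h3
  have B := hrect u 1 v₁ v₂ hu1 hu2 le_rfl h1 h2 h3
  rw [h0v v₁ ⟨h1, le_trans h2 h3⟩, h0v v₂ ⟨le_trans h1 h2, h3⟩] at A
  rw [h1v v₁ ⟨h1, le_trans h2 h3⟩, h1v v₂ ⟨le_trans h1 h2, h3⟩] at B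
  constructor <;> linarith

lemma cop_lip1 (hC : IsCopula C) {u₁ u₂ v : ℝ} (hu₁ : u₁ ∈ Icc (0:ℝ) 1) (hu₂ : u₂ ∈ Icc (0:ℝ) 1)
    (hv : v ∈ Icc (0:ℝ) 1) : |C u₂ v - C u₁ v| ≤ |u₂ - u₁| := by
  rcases le_total u₁ u₂ with h | h
  · obtain ⟨m, l⟩ := cop_mono1 hC hu₁.1 h hu₂.2 hv.1 hv.2
    rw [abs_of_nonneg (by linarith), abs_of_nonneg (by linarith : (0:ℝ) ≤ u₂ - u₁)]; linarith
  · obtain ⟨m, l⟩ := cop_mono1 hC hu₂.1 h hu₁.2 hv.1 hv.2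
    rw [abs_of_nonpos (by linarith), abs_of_nonpos (by linarith : u₂ - u₁ ≤ 0)]; linarith

lemma cop_lip2 (hC : IsCopula C) {u v₁ v₂ : ℝ} (hv₁ : v₁ ∈ Icc (0:ℝ) 1) (hv₂ : v₂ ∈ Icc (0:ℝ) 1)
    (hu : u ∈ Icc (0:ℝ) 1) : |C u v₂ - C u v₁| ≤ |v₂ - v₁| := by
  rcases le_total v₁ v₂ with h | h
  · obtain ⟨m, l⟩ := cop_mono2 hC hv₁.1 h hv₂.2 hu.1 hu.2
    rw [abs_of_nonneg (by linarith), abs_of_nonneg (by linarith : (0:ℝ) ≤ v₂ - v₁)]; linarith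
  · obtain ⟨m, l⟩ := cop_mono2 hC hv₂.1 h hv₁.2 hu.1 hu.2
    rw [abs_of_nonpos (by linarith), abs_of_nonpos (by linarith : v₂ - v₁ ≤ 0)]; linarith

lemma cop_lip (hC : IsCopula C) {u₁ v₁ u₂ v₂ : ℝ} (hu₁ : u₁ ∈ Icc (0:ℝ) 1)
    (hv₁ : v₁ ∈ Icc (0:ℝ) 1) (hu₂ : u₂ ∈ Icc (0:ℝ) 1) (hv₂ : v₂ ∈ Icc (0:ℝ) 1) :
    |C u₂ v₂ - C u₁ v₁| ≤ |u₂ - u₁| + |v₂ - v₁| :=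
  calc |C u₂ v₂ - C u₁ v₁| ≤ |C u₂ v₂ - C u₁ v₂| + |C u₁ v₂ - C u₁ v₁| := abs_sub_le _ _ _
    _ ≤ |u₂ - u₁| + |v₂ - v₁| :=
        add_le_add (cop_lip1 hC hu₁ hu₂ hv₂) (cop_lip2 hC hv₁ hv₂ hu₁)

lemma contOn_of_lip2 {f : ℝ → ℝ} (h : ∀ x ∈ Icc (0:ℝ) 1, ∀ y ∈ Icc (0:ℝ) 1,
    |f x - f y| ≤ 2 * |x - y|) : ContinuousOn f (Icc (0:ℝ) 1) := by
  have : LipschitzOnWith 2 f (Icc (0:ℝ) 1) := by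
    rw [lipschitzOnWith_iff_dist_le_mul]
    intro x hx y hy
    rw [Real.dist_eq, Real.dist_eq]
    have := h x hx y hy
    push_cast
    linarith
  exact this.continuousOn

lemma cop_cont_slice (hC : IsCopula C) {x : ℝ} (hx : x ∈ Icc (0:ℝ) 1) :
    ContinuousOn (fun v => C x v) (Icc (0:ℝ) 1) := by
  apply contOn_of_lip2
  intro p hp q hq
  have h1 := cop_lip2 hC hq hp hx
  have h2 : (0:ℝ) ≤ |p - q| := abs_nonneg _
  linarith

lemma cop_cont_diag (hC : IsCopula C) : ContinuousOn (fun x => C x x) (Icc (0:ℝ) 1) := by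
  apply contOn_of_lip2
  intro p hp q hq
  have := cop_lip hC hq hq hp hp
  linarith

lemma cop_cont_anti (hC : IsCopula C) : ContinuousOn (fun x => C x (1 - x)) (Icc (0:ℝ) 1) := by
  apply contOn_of_lip2
  intro p hp q hq
  have h1q : (1:ℝ) - q ∈ Icc (0:ℝ) 1 := ⟨by linarith [hq.2], by linarith [hq.1]⟩
  have h1p : (1:ℝ) - p ∈ Icc (0:ℝ) 1 := ⟨by linarith [hp.2], by linarith [hp.1]⟩
  have hl := cop_lip hC hq h1q hp h1p
  have he : |1 - p - (1 - q)| = |p - q| := by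
    rw [show (1:ℝ) - p - (1 - q) = -(p - q) by ring, abs_neg]
  rw [he] at hl
  linarith

lemma cop_cont_g (hC : IsCopula C) :
    ContinuousOn (fun x => ∫ v in (0:ℝ)..1, C x v) (Icc (0:ℝ) 1) := by
  apply contOn_of_lip2
  intro p hp q hq
  have u01 : uIcc (0:ℝ) 1 = Icc 0 1 := uIcc_of_le zero_le_one
  have ip : IntervalIntegrable (fun v => C p v) volume 0 1 :=
    (u01 ▸ cop_cont_slice hC hp).intervalIntegrable
  have iq : IntervalIntegrable (fun v => C q v) volume 0 1 :=
    (u01 ▸ cop_cont_slice hC hq).intervalIntegrable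
  have hsub : (∫ v in (0:ℝ)..1, C p v) - (∫ v in (0:ℝ)..1, C q v)
      = ∫ v in (0:ℝ)..1, (C p v - C q v) := (intervalIntegral.integral_sub ip iq).symm
  rw [hsub]
  have hb : ∀ v ∈ Set.uIoc (0:ℝ) 1, ‖C p v - C q v‖ ≤ |p - q| := by
    intro v hv
    have hv' : v ∈ Icc (0:ℝ) 1 := u01 ▸ uIoc_subset_uIcc hv
    exact cop_lip1 hC hq hp hv'
  have hn := intervalIntegral.norm_integral_le_of_norm_le_const hb
  rw [Real.norm_eq_abs] at hn
  have h2 : (0:ℝ) ≤ |p - q| := abs_nonneg _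
  simp only [sub_zero, abs_one, mul_one] at hn
  linarith

end Helpers


/-- Measures of the ordinal sum of a single copula C on the interval (a, 1−a). -/
theorem measures_ordinalSum_single (aP : ℝ) (ha : aP ∈ Icc (0:ℝ) (1/2))
    (C B : ℝ → ℝ → ℝ) (hC : IsCopula C)
    (hB : IsOrdinalSum (fun _ : Fin 1 => aP) (fun _ => 1 - aP) (fun _ => C) B) :
    spearmanRho B = (1 - 2*aP) ^ 3 * spearmanRho C + 8*aP^3 - 12*aP^2 + 6*aP ∧
    footrule B = (1 - 2*aP) ^ 2 * footrule C + 4*aP - 4*aP^2 ∧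
    giniGamma B = (1 - 2*aP) ^ 2 * giniGamma C + 4*aP - 4*aP^2 ∧
    blomqvistBeta B = (1 - 2*aP) * blomqvistBeta C + 2*aP := by
  obtain ⟨ha0, ha2⟩ := ha
  set s := 1 - 2*aP with hs_def
  have hs0 : (0:ℝ) ≤ s := by rw [hs_def]; linarith
  have hb1 : aP ≤ 1 - aP := by linarith
  have hb2 : 1 - aP ≤ 1 := by linarith
  have hbs : (1:ℝ) - aP = aP + s := by rw [hs_def]; ring
  have h0v := hC.1
  have hu0 := hC.2.1
  have hu1 := hC.2.2.1
  have h1v := hC.2.2.2.1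
  -- ordinal sum components
  have hform : ∀ u ∈ Icc aP (1-aP), ∀ v ∈ Icc aP (1-aP),
      B u v = aP + s * C ((u - aP)/s) ((v - aP)/s) := by
    intro u hu v hv
    have h := hB.2.2.1 0 u hu v hv
    simpa [show (1:ℝ) - aP - aP = s by rw [hs_def]; ring] using h
  have hmin : ∀ u ∈ Icc (0:ℝ) 1, ∀ v ∈ Icc (0:ℝ) 1,
      ¬(u ∈ Icc aP (1-aP) ∧ v ∈ Icc aP (1-aP)) → B u v = min u v :=
    fun u hu v hv h => hB.2.2.2 u hu v hv (fun _ => h)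
  have hmem : ∀ u ∈ Icc aP (1-aP), (u - aP)/s ∈ Icc (0:ℝ) 1 := by
    intro u hu
    rcases hs0.eq_or_lt with h | h
    · rw [← h, div_zero]; exact ⟨le_rfl, zero_le_one⟩
    · exact ⟨div_nonneg (by linarith [hu.1]) hs0,
        (div_le_one h).2 (by rw [hbs] at hu; linarith [hu.2])⟩
  -- B equals min on the outer region
  have hBmin : ∀ u ∈ Icc (0:ℝ) 1, ∀ v ∈ Icc (0:ℝ) 1,
      (u ≤ aP ∨ 1 - aP ≤ u ∨ v ≤ aP ∨ 1 - aP ≤ v) → B u v = min u v := by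
    intro u hu v hv h
    by_cases hsq : u ∈ Icc aP (1-aP) ∧ v ∈ Icc aP (1-aP)
    · obtain ⟨hu', hv'⟩ := hsq
      rw [hform u hu' v hv']
      have hyu := hmem u hu'
      have hyv := hmem v hv'
      rcases hs0.eq_or_lt with hsz | hsz
      · have h1a : 1 - aP = aP := by rw [hbs, ← hsz]; ring
        have huA : u = aP := le_antisymm (h1a ▸ hu'.2) hu'.1
        have hvA : v = aP := le_antisymm (h1a ▸ hv'.2) hv'.1
        rw [← hsz, zero_mul, add_zero, huA, hvA, min_self]
      · have hs' : s ≠ 0 := ne_of_gt hsz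
        rcases h with h|h|h|h
        · have huA : u = aP := le_antisymm h hu'.1
          rw [huA, sub_self, zero_div, h0v _ hyv, mul_zero, add_zero]
          exact (min_eq_left hv'.1).symm
        · have huA : u = 1 - aP := le_antisymm hu'.2 h
          have hnum : u - aP = s := by rw [huA, hbs]; ring
          rw [hnum, div_self hs', h1v _ hyv,
            show s * ((v - aP)/s) = v - aP by field_simp,
            show aP + (v - aP) = v by ring]
          exact (min_eq_right (by rw [huA]; exact hv'.2)).symm
        · have hvA : v = aP := le_antisymm h hv'.1
          rw [hvA, sub_self, zero_div, hu0 _ hyu, mul_zero, add_zero]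
          exact (min_eq_right hu'.1).symm
        · have hvA : v = 1 - aP := le_antisymm hv'.2 h
          have hnum : v - aP = s := by rw [hvA, hbs]; ring
          rw [hnum, div_self hs', hu1 _ hyu,
            show s * ((u - aP)/s) = u - aP by field_simp,
            show aP + (u - aP) = u by ring]
          exact (min_eq_left (by rw [hvA]; exact hu'.2)).symm
    · exact hmin u hu v hv hsq
  -- integral of min-slice
  have minInt : ∀ u ∈ Icc (0:ℝ) 1, (∫ v in (0:ℝ)..1, min u v) = u - u^2/2 := by
    intro u hu
    have e1 : EqOn (fun v => min u v) (fun v => v) (Icc 0 u) := fun v hv => min_eq_right hv.2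
    have e2 : EqOn (fun v => min u v) (fun v => u) (Icc u 1) := fun v hv => min_eq_left hv.1
    have u1 : uIcc (0:ℝ) u = Icc 0 u := uIcc_of_le hu.1
    have u2 : uIcc u (1:ℝ) = Icc u 1 := uIcc_of_le hu.2
    have i1 : IntervalIntegrable (fun v => min u v) volume 0 u :=
      II_of_eqOn (by rw [u1]; exact e1.symm) intervalIntegral.intervalIntegrable_id
    have i2 : IntervalIntegrable (fun v => min u v) volume u 1 :=
      II_of_eqOn (by rw [u2]; exact e2.symm) intervalIntegrable_const
    rw [← intervalIntegral.integral_add_adjacent_intervals i1 i2,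
      intervalIntegral.integral_congr (show EqOn (fun v => min u v) (fun v => v) (uIcc 0 u) by
        rw [u1]; exact e1),
      intervalIntegral.integral_congr (show EqOn (fun v => min u v) (fun v => u) (uIcc u 1) by
        rw [u2]; exact e2),
      integral_id, intervalIntegral.integral_const]
    simp only [smul_eq_mul]
    ring
  -- integrability of compositions with the affine rescaling
  have hcompII : ∀ f : ℝ → ℝ, ContinuousOn f (Icc (0:ℝ) 1) →
      IntervalIntegrable (fun u => f ((u - aP)/s)) volume aP (1-aP) := by
    intro f hf
    apply ContinuousOn.intervalIntegrable
    apply hf.comp (Continuous.continuousOn (by fun_prop))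
    intro u hu
    exact hmem u (by rwa [uIcc_of_le hb1] at hu)
  -- the middle integral of  aP + s * f((u-aP)/s)
  have midInt : ∀ f : ℝ → ℝ, ContinuousOn f (Icc (0:ℝ) 1) →
      (∫ u in aP..(1-aP), (aP + s * f ((u-aP)/s)))
        = s*aP + s*(s * ∫ x in (0:ℝ)..1, f x) := by
    intro f hf
    have hi : IntervalIntegrable (fun u => s * f ((u-aP)/s)) volume aP (1-aP) :=
      (hcompII f hf).const_mul s
    have h1 : (∫ u in aP..(1-aP), (aP + s * f ((u-aP)/s)))
        = (∫ _u in aP..(1-aP), (aP:ℝ)) + ∫ u in aP..(1-aP), s * f ((u-aP)/s) :=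
      intervalIntegral.integral_add intervalIntegrable_const hi
    have h2 : (∫ u in aP..(1-aP), s * f ((u-aP)/s))
        = s * ∫ u in aP..(1-aP), f ((u-aP)/s) := intervalIntegral.integral_const_mul s _
    have h3 : (∫ u in aP..(1-aP), f ((u-aP)/s)) = s * ∫ x in (0:ℝ)..1, f x := by
      rw [hbs]; exact sub_aff f aP s
    rw [h1, h2, h3, intervalIntegral.integral_const, smul_eq_mul]
    ring
  -- inner slice value on the middle band
  have R2 : ∀ u ∈ Icc aP (1-aP), (∫ v in (0:ℝ)..1, B u v)
      = aP^2/2 + s*aP + aP*u + s^2 * ∫ v in (0:ℝ)..1, C ((u-aP)/s) v := by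
    intro u hu
    have hx : (u - aP)/s ∈ Icc (0:ℝ) 1 := hmem u hu
    have hu01 : u ∈ Icc (0:ℝ) 1 := ⟨by linarith [hu.1], by linarith [hu.2]⟩
    have e1 : EqOn (fun v => B u v) (fun v => v) (Icc 0 aP) := by
      intro v hv
      have hv01 : v ∈ Icc (0:ℝ) 1 := ⟨hv.1, by linarith [hv.2]⟩
      show B u v = v
      rw [hBmin u hu01 v hv01 (Or.inr (Or.inr (Or.inl hv.2)))]
      exact min_eq_right (le_trans hv.2 hu.1)
    have e3 : EqOn (fun v => B u v) (fun _ => u) (Icc (1-aP) 1) := by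
      intro v hv
      have hv01 : v ∈ Icc (0:ℝ) 1 := ⟨by linarith [hv.1], hv.2⟩
      show B u v = u
      rw [hBmin u hu01 v hv01 (Or.inr (Or.inr (Or.inr hv.1)))]
      exact min_eq_left (le_trans hu.2 hv.1)
    have e2 : EqOn (fun v => B u v) (fun v => aP + s * C ((u-aP)/s) ((v - aP)/s))
        (Icc aP (1-aP)) := fun v hv => hform u hu v hv
    have i2 : IntervalIntegrable (fun v => aP + s * C ((u-aP)/s) ((v - aP)/s)) volume aP (1-aP) :=
      intervalIntegrable_const.add ((hcompII _ (cop_cont_slice hC hx)).const_mul s)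
    have hmid : (∫ v in aP..(1-aP), (aP + s * C ((u-aP)/s) ((v - aP)/s)))
        = s*aP + s*(s * ∫ y in (0:ℝ)..1, C ((u-aP)/s) y) :=
      midInt (fun y => C ((u-aP)/s) y) (cop_cont_slice hC hx)
    rw [split3 ha0 hb1 hb2 e1 e2 e3 intervalIntegral.intervalIntegrable_id i2
        intervalIntegrable_const,
      hmid, integral_id, intervalIntegral.integral_const, smul_eq_mul]
    ring
  -- inner slice value off the middle band
  have Fout : ∀ u ∈ Icc (0:ℝ) 1, (u ≤ aP ∨ 1 - aP ≤ u) →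
      (∫ v in (0:ℝ)..1, B u v) = u - u^2/2 := by
    intro u hu h
    have hE : EqOn (fun v => B u v) (fun v => min u v) (uIcc (0:ℝ) 1) := by
      intro v hv
      have hv01 : v ∈ Icc (0:ℝ) 1 := by rwa [uIcc_of_le zero_le_one] at hv
      exact hBmin u hu v hv01 (by tauto)
    rw [intervalIntegral.integral_congr hE, minInt u hu]
  -- the double integral of B
  have hGc := cop_cont_g hC
  have midRho : (∫ u in aP..(1-aP),
        (aP^2/2 + s*aP + aP*u + s^2 * ∫ v in (0:ℝ)..1, C ((u-aP)/s) v))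
      = (aP^2/2 + s*aP)*((1-aP)-aP) + aP*(((1-aP)^2-aP^2)/2)
          + s^2*(s * ∫ x in (0:ℝ)..1, ∫ v in (0:ℝ)..1, C x v) := by
    have hi : IntervalIntegrable (fun u => s^2 * ∫ v in (0:ℝ)..1, C ((u-aP)/s) v)
        volume aP (1-aP) := (hcompII _ hGc).const_mul (s^2)
    have h1 : (∫ u in aP..(1-aP),
          (aP^2/2 + s*aP + aP*u + s^2 * ∫ v in (0:ℝ)..1, C ((u-aP)/s) v))
        = (∫ u in aP..(1-aP), (aP^2/2 + s*aP + aP*u))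
          + ∫ u in aP..(1-aP), s^2 * ∫ v in (0:ℝ)..1, C ((u-aP)/s) v :=
      intervalIntegral.integral_add
        (intervalIntegrable_const.add (intervalIntegral.intervalIntegrable_id.const_mul aP)) hi
    have h2 : (∫ u in aP..(1-aP), s^2 * ∫ v in (0:ℝ)..1, C ((u-aP)/s) v)
        = s^2 * ∫ u in aP..(1-aP), (fun x => ∫ v in (0:ℝ)..1, C x v) ((u-aP)/s) :=
      intervalIntegral.integral_const_mul _ _
    have h3 : (∫ u in aP..(1-aP), (fun x => ∫ v in (0:ℝ)..1, C x v) ((u-aP)/s))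
        = s * ∫ x in (0:ℝ)..1, ∫ v in (0:ℝ)..1, C x v := by
      rw [hbs]; exact sub_aff (fun x => ∫ v in (0:ℝ)..1, C x v) aP s
    have h4 : (∫ u in aP..(1-aP), (aP^2/2 + s*aP + aP*u))
        = (aP^2/2 + s*aP)*((1-aP)-aP) + aP*(((1-aP)^2-aP^2)/2) := int_affine _ _ _ _
    rw [h1, h2, h3, h4]
  have rhoEq : (∫ u in (0:ℝ)..1, ∫ v in (0:ℝ)..1, B u v)
      = ((aP^2-0^2)/2 - (aP^3-0^3)/6)
        + ((aP^2/2 + s*aP)*((1-aP)-aP) + aP*(((1-aP)^2-aP^2)/2)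
          + s^2*(s * ∫ x in (0:ℝ)..1, ∫ v in (0:ℝ)..1, C x v))
        + ((1^2-(1-aP)^2)/2 - (1^3-(1-aP)^3)/6) := by
    have e1 : EqOn (fun u => ∫ v in (0:ℝ)..1, B u v) (fun u => u - u^2/2) (Icc 0 aP) :=
      fun u hu => Fout u ⟨hu.1, by linarith [hu.2]⟩ (Or.inl hu.2)
    have e3 : EqOn (fun u => ∫ v in (0:ℝ)..1, B u v) (fun u => u - u^2/2) (Icc (1-aP) 1) :=
      fun u hu => Fout u ⟨by linarith [hu.1], hu.2⟩ (Or.inr hu.1)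
    have e2 : EqOn (fun u => ∫ v in (0:ℝ)..1, B u v)
        (fun u => aP^2/2 + s*aP + aP*u + s^2 * ∫ v in (0:ℝ)..1, C ((u-aP)/s) v)
        (Icc aP (1-aP)) := fun u hu => R2 u hu
    have iq1 : IntervalIntegrable (fun u => u - u^2/2) volume 0 aP :=
      intervalIntegral.intervalIntegrable_id.sub
        ((intervalIntegral.intervalIntegrable_pow 2).div_const 2)
    have iq3 : IntervalIntegrable (fun u => u - u^2/2) volume (1-aP) 1 :=
      intervalIntegral.intervalIntegrable_id.sub
        ((intervalIntegral.intervalIntegrable_pow 2).div_const 2)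
    have i2 : IntervalIntegrable
        (fun u => aP^2/2 + s*aP + aP*u + s^2 * ∫ v in (0:ℝ)..1, C ((u-aP)/s) v)
        volume aP (1-aP) :=
      (intervalIntegrable_const.add (intervalIntegral.intervalIntegrable_id.const_mul aP)).add
        ((hcompII _ hGc).const_mul (s^2))
    rw [split3 ha0 hb1 hb2 e1 e2 e3 iq1 i2 iq3, int_quad, int_quad, midRho]
  -- diagonal integral
  have diagEq : (∫ u in (0:ℝ)..1, B u u)
      = ((aP^2-0^2)/2) + (s*aP + s*(s * ∫ x in (0:ℝ)..1, C x x)) + ((1^2-(1-aP)^2)/2) := by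
    have e1 : EqOn (fun u => B u u) (fun u => u) (Icc 0 aP) := by
      intro u hu
      have hu01 : u ∈ Icc (0:ℝ) 1 := ⟨hu.1, by linarith [hu.2]⟩
      show B u u = u
      rw [hBmin u hu01 u hu01 (Or.inl hu.2), min_self]
    have e3 : EqOn (fun u => B u u) (fun u => u) (Icc (1-aP) 1) := by
      intro u hu
      have hu01 : u ∈ Icc (0:ℝ) 1 := ⟨by linarith [hu.1], hu.2⟩
      show B u u = u
      rw [hBmin u hu01 u hu01 (Or.inr (Or.inl hu.1)), min_self]
    have e2 : EqOn (fun u => B u u) (fun u => aP + s * C ((u-aP)/s) ((u - aP)/s))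
        (Icc aP (1-aP)) := fun u hu => hform u hu u hu
    have i2 : IntervalIntegrable (fun u => aP + s * C ((u-aP)/s) ((u - aP)/s)) volume aP (1-aP) :=
      intervalIntegrable_const.add ((hcompII _ (cop_cont_diag hC)).const_mul s)
    have hmid : (∫ u in aP..(1-aP), (aP + s * C ((u-aP)/s) ((u - aP)/s)))
        = s*aP + s*(s * ∫ x in (0:ℝ)..1, C x x) :=
      midInt (fun x => C x x) (cop_cont_diag hC)
    rw [split3 ha0 hb1 hb2 e1 e2 e3 intervalIntegral.intervalIntegrable_id i2
        intervalIntegral.intervalIntegrable_id,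
      hmid, integral_id, integral_id]
  -- antidiagonal integral
  have antiEq : (∫ u in (0:ℝ)..1, B u (1-u))
      = ((aP^2-0^2)/2) + (s*aP + s*(s * ∫ x in (0:ℝ)..1, C x (1-x)))
        + ((1 - (1-aP)) - (1^2-(1-aP)^2)/2) := by
    have e1 : EqOn (fun u => B u (1-u)) (fun u => u) (Icc 0 aP) := by
      intro u hu
      have hu01 : u ∈ Icc (0:ℝ) 1 := ⟨hu.1, by linarith [hu.2]⟩
      have hv01 : 1 - u ∈ Icc (0:ℝ) 1 := ⟨by linarith [hu.2, hu01.2], by linarith [hu.1]⟩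
      show B u (1-u) = u
      rw [hBmin u hu01 (1-u) hv01 (Or.inl hu.2)]
      exact min_eq_left (by linarith [hu.2])
    have e3 : EqOn (fun u => B u (1-u)) (fun u => 1 - u) (Icc (1-aP) 1) := by
      intro u hu
      have hu01 : u ∈ Icc (0:ℝ) 1 := ⟨by linarith [hu.1], hu.2⟩
      have hv01 : 1 - u ∈ Icc (0:ℝ) 1 := ⟨by linarith [hu.2], by linarith [hu.1]⟩
      show B u (1-u) = 1 - u
      rw [hBmin u hu01 (1-u) hv01 (Or.inr (Or.inl hu.1))]
      exact min_eq_right (by linarith [hu.1])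
    have e2 : EqOn (fun u => B u (1-u)) (fun u => aP + s * C ((u-aP)/s) (1 - (u - aP)/s))
        (Icc aP (1-aP)) := by
      intro u hu
      have hv : 1 - u ∈ Icc aP (1-aP) := ⟨by linarith [hu.2], by linarith [hu.1]⟩
      show B u (1-u) = aP + s * C ((u-aP)/s) (1 - (u - aP)/s)
      rw [hform u hu (1-u) hv]
      rcases eq_or_ne s 0 with hsz | hsz
      · rw [hsz]; simp
      · rw [show (1 - u - aP)/s = 1 - (u - aP)/s by field_simp; rw [hs_def]; ring]
    have i2 : IntervalIntegrable (fun u => aP + s * C ((u-aP)/s) (1 - (u - aP)/s))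
        volume aP (1-aP) :=
      intervalIntegrable_const.add ((hcompII _ (cop_cont_anti hC)).const_mul s)
    have hmid : (∫ u in aP..(1-aP), (aP + s * C ((u-aP)/s) (1 - (u - aP)/s)))
        = s*aP + s*(s * ∫ x in (0:ℝ)..1, C x (1-x)) :=
      midInt (fun x => C x (1-x)) (cop_cont_anti hC)
    have ione : IntervalIntegrable (fun u : ℝ => 1 - u) volume (1-aP) 1 :=
      intervalIntegrable_const.sub intervalIntegral.intervalIntegrable_id
    rw [split3 ha0 hb1 hb2 e1 e2 e3 intervalIntegral.intervalIntegrable_id i2 ione,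
      hmid, integral_id, int_one_sub]
  -- Blomqvist beta
  have hhalf : (1:ℝ)/2 ∈ Icc aP (1-aP) := ⟨ha2, by linarith⟩
  have hBhalf := hform (1/2) hhalf (1/2) hhalf
  refine ⟨?_, ?_, ?_, ?_⟩
  · simp only [spearmanRho]
    rw [rhoEq, hs_def]
    ring
  · simp only [footrule]
    rw [diagEq, hs_def]
    ring
  · simp only [giniGamma]
    rw [diagEq, antiEq, hs_def]
    ring
  · simp only [blomqvistBeta]
    rcases eq_or_ne s 0 with hsz | hsz
    · have haP : aP = 1/2 := by rw [hs_def] at hsz; linarith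
      rw [hBhalf, hsz, haP]
      norm_num
    · rw [hBhalf, show ((1:ℝ)/2 - aP)/s = 1/2 by
        field_simp; rw [hs_def], hs_def]
      ring
end
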